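/- Let 𝒢=(𝒱,ℰ) be a bipartite countable locally finite graph, let C₄ be the 4-cycle, and let G ⊆ Aut(𝒢) be any subgroup. Then the homomorphism space Hom(𝒢, C₄) is both Hammersley-Clifford and G-Hammersley-Clifford. -/

import Mathlib

open scoped Classical

namespace HC

variable {V : Type*} {A : Type*}

/-- The external vertex boundary of a set of vertices. -/
def boundary (G : SimpleGraph V) (F : Set V) : Set V :=
  {u | u ∉ F ∧ ∃ v ∈ F, G.Adj u v}

/-- The language of `X` on `F`: the set of patterns on `F` appearing in `X`. -/
def lang (X : Set (V → A)) (F : Set V) : Set (F → A) :=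
  F.restrict '' X

/-- The `n`-ball around `v` in the graph metric. -/
def ballSet (G : SimpleGraph V) (v : V) (n : ℕ) : Set V :=
  {u | ∃ p : G.Walk v u, p.length ≤ n}

/-- Asymptotic pairs: pairs of configurations in `X` differing at finitely many sites. -/
def Delta (X : Set (V → A)) : Set ((V → A) × (V → A)) :=
  {p | p.1 ∈ X ∧ p.2 ∈ X ∧ {v | p.1 v ≠ p.2 v}.Finite}

/-- Topological Markov field. -/
def IsTMF [TopologicalSpace A] (G : SimpleGraph V) (X : Set (V → A)) : Prop :=
  IsClosed X ∧
    ∀ x ∈ X, ∀ y ∈ X, ∀ F : Set V, F.Finite →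
      (∀ u ∈ boundary G F, x u = y u) →
      (fun v => if v ∈ F then x v else y v) ∈ X

/-- Nearest neighbour constraint space: the set of configurations avoiding a
set of forbidden patterns on finite cliques. -/
def IsNNConstraint (G : SimpleGraph V) (X : Set (V → A)) : Prop :=
  ∃ 𝓕 : ∀ F : Set V, Set (F → A),
    X = {x : V → A | ∀ F : Set V, F.Finite → G.IsClique F → F.restrict x ∉ 𝓕 F}

/-- `s` is a safe symbol for `X`. -/
def IsSafeSymbol (X : Set (V → A)) (s : A) : Prop :=
  ∀ x ∈ X, ∀ S : Set V, (fun v => if v ∈ S then x v else s) ∈ X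

/-- The pattern `(c at v, d at w)` belongs to the language of `X`. -/
def edgeB (X : Set (V → A)) (v w : V) (c d : A) : Prop :=
  ∃ x ∈ X, x v = c ∧ x w = d

/-- The single-site pattern `c at v` belongs to the language of `X`. -/
def siteB (X : Set (V → A)) (v : V) (c : A) : Prop :=
  ∃ x ∈ X, x v = c

/-- The pairs `(x,y)` and `(z,w)` are Markov-similar. -/
def MarkovSimilar (G : SimpleGraph V) (x y z w : V → A) : Prop :=
  ∃ S : Set V, S.Finite ∧
    (∀ u, u ∉ S → x u = y u ∧ z u = w u) ∧
    (∀ u, u ∈ S ∪ boundary G S → x u = z u ∧ y u = w u)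

/-- A Markov cocycle on `X` (realised as a real function on pairs of
configurations, vanishing off the asymptotic relation `Δ_X`). -/
def IsMarkovCocycle (G : SimpleGraph V) (X : Set (V → A))
    (M : (V → A) → (V → A) → ℝ) : Prop :=
  (∀ x y : V → A, (x, y) ∉ Delta X → M x y = 0) ∧
  (∀ x y z : V → A, (x, y) ∈ Delta X → (y, z) ∈ Delta X → M x z = M x y + M y z) ∧
  (∀ x y z w : V → A, (x, y) ∈ Delta X → (z, w) ∈ Delta X →
    MarkovSimilar G x y z w → M x y = M z w)

/-- A nearest neighbour interaction: a real weight for each pattern,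
vanishing on patterns whose domain is not a finite clique. -/
def IsNNInteraction (G : SimpleGraph V) (U : ∀ F : Set V, (F → A) → ℝ) : Prop :=
  ∀ F : Set V, ¬(F.Finite ∧ G.IsClique F) → ∀ p : F → A, U F p = 0

/-- `Σ_{F ⊆ V finite} (U(y|_F) - U(x|_F))`. -/
noncomputable def gibbsSum (U : ∀ F : Set V, (F → A) → ℝ) (x y : V → A) : ℝ :=
  ∑ᶠ F : Set V, (U F (F.restrict y) - U F (F.restrict x))

/-- A Gibbs cocycle with some nearest neighbour interaction. -/
def IsGibbsCocycle (G : SimpleGraph V) (X : Set (V → A))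
    (M : (V → A) → (V → A) → ℝ) : Prop :=
  (∀ x y : V → A, (x, y) ∉ Delta X → M x y = 0) ∧
  ∃ U : ∀ F : Set V, (F → A) → ℝ, IsNNInteraction G U ∧
    ∀ x y : V → A, (x, y) ∈ Delta X → M x y = gibbsSum U x y

/-- The space `𝐌_X` of Markov cocycles on `X`. -/
def markovSet (G : SimpleGraph V) (X : Set (V → A)) :
    Set ((V → A) → (V → A) → ℝ) :=
  {M | IsMarkovCocycle G X M}

/-- The space `𝐆_X` of Gibbs cocycles with nearest neighbour interactions on `X`. -/
def gibbsSet (G : SimpleGraph V) (X : Set (V → A)) :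
    Set ((V → A) → (V → A) → ℝ) :=
  {M | IsGibbsCocycle G X M}

/-- `X` is Hammersley-Clifford: `𝐌_X = 𝐆_X`. -/
def IsHammersleyClifford (G : SimpleGraph V) (X : Set (V → A)) : Prop :=
  markovSet G X = gibbsSet G X

/-- The action of a permutation of the vertices on configurations. -/
def confAct (g : Equiv.Perm V) (x : V → A) : V → A :=
  fun v => x (g⁻¹ v)

/-- `S` consists of automorphisms of the graph `G`. -/
def PreservesAdj (G : SimpleGraph V) (S : Subgroup (Equiv.Perm V)) : Prop :=
  ∀ g ∈ S, ∀ u v : V, G.Adj (g u) (g v) ↔ G.Adj u v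

/-- `X` is invariant under the subgroup `S`. -/
def InvariantSpace (S : Subgroup (Equiv.Perm V)) (X : Set (V → A)) : Prop :=
  ∀ g ∈ S, confAct g '' X = X

/-- The cocycle `M` is `S`-invariant. -/
def InvariantCocycle (S : Subgroup (Equiv.Perm V)) (M : (V → A) → (V → A) → ℝ) : Prop :=
  ∀ g ∈ S, ∀ x y : V → A, M (confAct g x) (confAct g y) = M x y

/-- The interaction `U` is `S`-invariant: `U(ga) = U(a)` for every pattern `a`. -/
def InvariantInteraction (S : Subgroup (Equiv.Perm V))
    (U : ∀ F : Set V, (F → A) → ℝ) : Prop :=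
  ∀ g ∈ S, ∀ F : Set V, ∀ x : V → A,
    U (⇑g '' F) ((⇑g '' F).restrict (confAct g x)) = U F (F.restrict x)

/-- The space `𝐌^G_X` of `S`-invariant Markov cocycles on `X`. -/
def markovSetInv (G : SimpleGraph V) (S : Subgroup (Equiv.Perm V)) (X : Set (V → A)) :
    Set ((V → A) → (V → A) → ℝ) :=
  {M | IsMarkovCocycle G X M ∧ InvariantCocycle S M}

/-- The space `𝐆^G_X` of Gibbs cocycles with `S`-invariant nearest neighbour
interactions on `X`. -/
def gibbsSetInv (G : SimpleGraph V) (S : Subgroup (Equiv.Perm V)) (X : Set (V → A)) :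
    Set ((V → A) → (V → A) → ℝ) :=
  {M | (∀ x y : V → A, (x, y) ∉ Delta X → M x y = 0) ∧
    ∃ U : ∀ F : Set V, (F → A) → ℝ, IsNNInteraction G U ∧ InvariantInteraction S U ∧
      ∀ x y : V → A, (x, y) ∈ Delta X → M x y = gibbsSum U x y}

/-- `X` is `G`-Hammersley-Clifford: `𝐌^G_X = 𝐆^G_X`. -/
def IsGHammersleyClifford (G : SimpleGraph V) (S : Subgroup (Equiv.Perm V))
    (X : Set (V → A)) : Prop :=
  markovSetInv G S X = gibbsSetInv G S X

/-- The symbol `a` can be folded into the symbol `b` in `X`. -/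
def FoldsInto (G : SimpleGraph V) (X : Set (V → A)) (a b : A) : Prop :=
  a ≠ b ∧
    ∀ v₁ v₂ v₃ : V, G.Adj v₁ v₂ → G.Adj v₂ v₃ → ∀ c : A,
      edgeB X v₁ v₂ a c →
        edgeB X v₁ v₂ b c ∧ edgeB X v₂ v₃ c b ∧
          ∃ x ∈ X, ∀ u ∈ boundary G (ballSet G v₁ 1), x u = b

/-- `X ∩ (𝒜∖{a})^𝒱`. -/
def foldSpace (X : Set (V → A)) (a : A) : Set (V → A) :=
  X ∩ {x | ∀ v, x v ≠ a}

/-- `Y` is a fold of `X` (and `X` an unfold of `Y`). -/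
def IsFoldOf (G : SimpleGraph V) (Y X : Set (V → A)) : Prop :=
  ∃ a b : A, FoldsInto G X a b ∧ Y = foldSpace X a

/-- `P₁, P₂` are the partite classes of a bipartition of `G`. -/
def IsBipartition (G : SimpleGraph V) (P₁ P₂ : Set V) : Prop :=
  (∀ v : V, v ∈ P₁ ∨ v ∈ P₂) ∧ Disjoint P₁ P₂ ∧
    ∀ u v : V, G.Adj u v → (u ∈ P₁ ∧ v ∈ P₂) ∨ (u ∈ P₂ ∧ v ∈ P₁)

/-- `G` is bipartite. -/
def Bipartite (G : SimpleGraph V) : Prop :=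
  ∃ P₁ P₂ : Set V, IsBipartition G P₁ P₂

/-- `θ^v_c(x)`: change the value of `x` at `v` to `c`. -/
noncomputable def theta (x : V → A) (v : V) (c : A) : V → A :=
  fun u => if u = v then c else x u

/-- `θ^{w₁,…,w_r}_{c₁,…,c_r}(x)`: change the value of `x` at each `w i` to `c i`. -/
noncomputable def multiUpdate (x : V → A) {r : ℕ} (w : Fin r → V) (c : Fin r → A) :
    V → A :=
  fun u => if h : ∃ i, w i = u then c h.choose else x u

/-- Restriction of a cocycle to the asymptotic pairs of a subspace `Y`. -/
noncomputable def restrictCocycle (Y : Set (V → A)) (M : (V → A) → (V → A) → ℝ) :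
    (V → A) → (V → A) → ℝ :=
  fun x y => if (x, y) ∈ Delta Y then M x y else 0

/-- The pair `(x,y)` is `U`-good for the cocycle `M`. -/
def VGood (M : (V → A) → (V → A) → ℝ) (U : ∀ F : Set V, (F → A) → ℝ)
    (x y : V → A) : Prop :=
  M x y = gibbsSum U x y

/-- `𝒱₁`: vertices `v` admitting a neighbour `w` with `(a,a) ∈ ℬ_{v,w}(X)`. -/
def Vone (G : SimpleGraph V) (X : Set (V → A)) (a : A) : Set V :=
  {v | ∃ w, G.Adj v w ∧ edgeB X v w a a}

/-- `𝒱₂`: vertices not in `𝒱₁` where the symbol `a` can appear. -/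
def Vtwo (G : SimpleGraph V) (X : Set (V → A)) (a : A) : Set V :=
  {v | v ∉ Vone G X a ∧ siteB X v a}

/-- The space of graph homomorphisms from `G` to `H`, as a configuration space. -/
def homSpace {B : Type*} (G : SimpleGraph V) (H : SimpleGraph B) : Set (V → B) :=
  {x | ∀ v w : V, G.Adj v w → H.Adj (x v) (x w)}

/-- The 4-cycle `C₄` on the vertices `{0,1,2,3}`. -/
def C4 : SimpleGraph (Fin 4) :=
  SimpleGraph.fromRel (fun i j => (i.1 + 1) % 4 = j.1)

/-! ### Basic alphabet lemmas -/

abbrev A4 := Fin 4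

def par (c : A4) : Fin 2 := ⟨c.val % 2, by omega⟩

def bf (c : A4) : A4 := ![2,3,0,1] c

def pf (c : A4) : A4 := ![1,0,3,2] c

def emb (t : Fin 2) : A4 := ⟨t.val, by omega⟩

lemma C4_adj_aux : ∀ a b : A4, (a ≠ b ∧ ((a.1+1)%4 = b.1 ∨ (b.1+1)%4 = a.1)) ↔ par a ≠ par b := by decide

lemma C4_adj (a b : A4) : C4.Adj a b ↔ par a ≠ par b := by
  rw [C4, SimpleGraph.fromRel_adj]
  exact C4_adj_aux a b

lemma par_bf : ∀ c, par (bf c) = par c := by decide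
lemma bf_bf : ∀ c, bf (bf c) = c := by decide
lemma par_pf : ∀ c, par (pf c) ≠ par c := by decide
lemma par_emb : ∀ t, par (emb t) = t := by decide
lemma pf_emb : ∀ t, pf (emb t) = emb (t+1) := by decide
lemma eq_bf_of_par_eq : ∀ c d : A4, par c = par d → c ≠ d → d = bf c := by decide
lemma bz_eq_bf : ∀ d : A4, d ≠ emb (par d) → emb (par d) = bf d := by decide
lemma fin2_neq : ∀ a b : Fin 2, a ≠ b ↔ b = a + 1 := by decide
lemma fin2_succ_ne : ∀ a : Fin 2, a + 1 ≠ a := by decide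


/-! ### Graph and hom-space basics -/

section Graph
variable {V : Type*} (G : SimpleGraph V)

lemma mem_hs {x : V → A4} :
    x ∈ homSpace G C4 ↔ ∀ v w, G.Adj v w → par (x v) ≠ par (x w) := by
  constructor
  · intro h v w hvw; exact (C4_adj _ _).1 (h v w hvw)
  · intro h v w hvw; exact (C4_adj _ _).2 (h v w hvw)

variable {G}

lemma parity_replace {x y : V → A4} (hx : x ∈ homSpace G C4)
    (h : ∀ v, par (y v) = par (x v)) : y ∈ homSpace G C4 := by
  rw [mem_hs] at hx ⊢
  intro v w hvw; rw [h v, h w]; exact hx v w hvw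

lemma upd_mem {x : V → A4} (hx : x ∈ homSpace G C4) {v : V} {c : A4}
    (h : par c = par (x v)) : Function.update x v c ∈ homSpace G C4 := by
  refine parity_replace hx (fun w => ?_)
  rcases eq_or_ne w v with rfl | hw
  · rw [Function.update_self]; exact h
  · rw [Function.update_of_ne hw]

noncomputable def pflip (C : Set V) (x : V → A4) : V → A4 := fun w => if w ∈ C then pf (x w) else x w

def CompClosed (G : SimpleGraph V) (C : Set V) : Prop :=
  ∀ u w, G.Adj u w → (u ∈ C ↔ w ∈ C)

lemma fin2_pf_ne : ∀ a b : A4, par a ≠ par b → par (pf a) ≠ par (pf b) := by decide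
lemma fin2_lem1 : ∀ a b c d : Fin 2, a ≠ b → c ≠ d → (a ≠ c ↔ b ≠ d) := by decide
lemma fin2_lem2 : ∀ a b c : Fin 2, a ≠ b → b ≠ c → a ≠ c → False := by decide
lemma emb_par_lem : ∀ (s t : Fin 2) (c : A4), s ≠ t →
    par c ≠ par (emb (t + (par c + s))) := by decide
lemma emb_par_lem2 : ∀ (s t r : Fin 2), s ≠ t →
    par (emb (s + r)) ≠ par (emb (t + r)) := by decide
lemma fin2_lem3 : ∀ a b p : Fin 2, a ≠ b → b + (p + a) = p + 1 := by decide

lemma pflip_mem {C : Set V} (hC : CompClosed G C) {x : V → A4}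
    (hx : x ∈ homSpace G C4) : pflip C x ∈ homSpace G C4 := by
  rw [mem_hs] at hx ⊢
  intro v w hvw
  have hne := hx v w hvw
  unfold pflip
  by_cases h : v ∈ C
  · rw [if_pos h, if_pos ((hC v w hvw).1 h)]
    exact fin2_pf_ne _ _ hne
  · rw [if_neg h, if_neg (fun hw => h ((hC v w hvw).2 hw))]; exact hne

lemma pflip_off {C : Set V} {x : V → A4} {w : V} (h : w ∉ C) : pflip C x w = x w :=
  if_neg h

lemma pflip_on {C : Set V} {x : V → A4} {w : V} (h : w ∈ C) : pflip C x w = pf (x w) :=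
  if_pos h

lemma pf_pf : ∀ c, pf (pf c) = c := by decide

lemma pflip_pflip {C : Set V} (x : V → A4) : pflip C (pflip C x) = x := by
  funext w; unfold pflip
  by_cases h : w ∈ C
  · rw [if_pos h, if_pos h, pf_pf]
  · rw [if_neg h, if_neg h]

lemma boundary_empty {C : Set V} (hC : CompClosed G C) : boundary G C = ∅ := by
  ext u; simp only [boundary, Set.mem_setOf_eq, Set.mem_empty_iff_false, iff_false]
  rintro ⟨hu, v, hv, hadj⟩; exact hu ((hC u v hadj).2 hv)

def comp (G : SimpleGraph V) (v : V) : Set V := {u | G.Reachable v u}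

lemma mem_comp_self (v : V) : v ∈ comp G v := SimpleGraph.Reachable.refl v

lemma comp_closed (v : V) : CompClosed G (comp G v) := by
  intro u w hadj
  constructor
  · intro hu; exact hu.trans hadj.reachable
  · intro hw; exact hw.trans hadj.symm.reachable

lemma comp_eq_of_mem {v u : V} (h : u ∈ comp G v) : comp G u = comp G v := by
  ext w; exact ⟨fun hw => h.trans hw, fun hw => h.symm.trans hw⟩

lemma closed_subset {P : Set V} (hP : CompClosed G P) {v : V} (hv : v ∈ P) :
    comp G v ⊆ P := by
  intro u hu
  obtain ⟨w⟩ := hu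
  induction w with
  | nil => exact hv
  | cons h p ih => exact ih ((hP _ _ h).1 hv)

lemma pd_closed {x y : V → A4} (hx : x ∈ homSpace G C4) (hy : y ∈ homSpace G C4) :
    CompClosed G {w | par (x w) ≠ par (y w)} := by
  intro u w hadj
  exact fin2_lem1 _ _ _ _ ((mem_hs G).1 hx u w hadj) ((mem_hs G).1 hy u w hadj)

section Eps
variable (ε : V → Fin 2) (hε : ∀ u w, G.Adj u w → ε u ≠ ε w)
include hε

lemma triangle_free {u v w : V} (h1 : G.Adj u v) (h2 : G.Adj v w) (h3 : G.Adj u w) :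
    False :=
  fin2_lem2 _ _ _ (hε u v h1) (hε v w h2) (hε u w h3)

omit hε

noncomputable def xcan : V → A4 := fun v => emb (ε v)

include hε in
lemma xcan_mem : xcan ε ∈ homSpace G C4 := by
  rw [mem_hs]
  intro v w hvw
  simp only [xcan, par_emb]
  exact hε v w hvw

noncomputable def base (v : V) (c : A4) : V → A4 :=
  fun w => if w = v then c else emb (ε w + (par c + ε v))

lemma base_at (v : V) (c : A4) : base ε v c v = c := if_pos rfl

include hε in
lemma base_mem (v : V) (c : A4) : base ε v c ∈ homSpace G C4 := by
  rw [mem_hs]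
  intro a b hab
  have hne := hε a b hab
  unfold base
  rcases eq_or_ne a v with rfl | ha
  · rw [if_pos rfl, if_neg hab.ne']
    exact emb_par_lem _ _ _ hne
  · rw [if_neg ha]
    rcases eq_or_ne b v with rfl | hb
    · rw [if_pos rfl]
      intro hcon
      exact emb_par_lem _ _ c (Ne.symm hne) hcon.symm
    · rw [if_neg hb]
      exact emb_par_lem2 _ _ _ hne

include hε in
lemma base_nbr {v u : V} (hadj : G.Adj v u) (c : A4) :
    base ε v c u = emb (par c + 1) := by
  have hne := hε v u hadj
  rw [base, if_neg hadj.ne']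
  congr 1
  exact fin2_lem3 _ _ _ hne

end Eps
end Graph
/-! ### Markov cocycle basics -/

section Cocycle
variable {V : Type*} {G : SimpleGraph V}

lemma diff_symm (x y : V → A4) : {v | y v ≠ x v} = {v | x v ≠ y v} := by
  ext v; exact ne_comm

lemma mem_delta {x y : V → A4} (hx : x ∈ homSpace G C4) (hy : y ∈ homSpace G C4)
    (h : {v | x v ≠ y v}.Finite) : (x, y) ∈ Delta (homSpace G C4) := ⟨hx, hy, h⟩

lemma delta_symm {x y : V → A4} (h : (x, y) ∈ Delta (homSpace G C4)) :
    (y, x) ∈ Delta (homSpace G C4) := ⟨h.2.1, h.1, by rw [diff_symm]; exact h.2.2⟩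

noncomputable def bflip (x : V → A4) (v : V) : V → A4 := Function.update x v (bf (x v))

lemma bflip_at (x : V → A4) (v : V) : bflip x v v = bf (x v) := Function.update_self _ _ _

lemma bflip_ne (x : V → A4) {v u : V} (h : u ≠ v) : bflip x v u = x u :=
  Function.update_of_ne h _ _

lemma bflip_mem {x : V → A4} (hx : x ∈ homSpace G C4) (v : V) :
    bflip x v ∈ homSpace G C4 := upd_mem hx (par_bf _)

lemma diff_upd_subset (x : V → A4) (v : V) (c : A4) :
    {w | x w ≠ Function.update x v c w} ⊆ {v} := by
  intro w hw
  simp only [Set.mem_setOf_eq] at hw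
  by_contra h
  exact hw (Function.update_of_ne h _ _).symm

lemma delta_upd {x : V → A4} (hx : x ∈ homSpace G C4) {v : V} {c : A4}
    (h : par c = par (x v)) : (x, Function.update x v c) ∈ Delta (homSpace G C4) :=
  ⟨hx, upd_mem hx h, Set.Finite.subset (Set.finite_singleton v) (diff_upd_subset x v c)⟩

lemma delta_bflip {x : V → A4} (hx : x ∈ homSpace G C4) (v : V) :
    (x, bflip x v) ∈ Delta (homSpace G C4) := delta_upd hx (par_bf _)

lemma delta_pflip {x : V → A4} (hx : x ∈ homSpace G C4) {C : Set V}
    (hC : CompClosed G C) (hCf : C.Finite) : (x, pflip C x) ∈ Delta (homSpace G C4) := by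
  refine ⟨hx, pflip_mem hC hx, Set.Finite.subset hCf ?_⟩
  intro w hw
  by_contra h
  exact hw (pflip_off h).symm

variable (M : (V → A4) → (V → A4) → ℝ)
variable (hM : IsMarkovCocycle G (homSpace G C4) M)
include hM

lemma M_self {x : V → A4} (hx : x ∈ homSpace G C4) : M x x = 0 := by
  have hd : (x, x) ∈ Delta (homSpace G C4) :=
    ⟨hx, hx, by simp⟩
  have := hM.2.1 x x x hd hd
  linarith

lemma M_inv {x y : V → A4} (h : (x, y) ∈ Delta (homSpace G C4)) : M y x = -M x y := by
  have := hM.2.1 x y x h (delta_symm h)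
  rw [M_self M hM h.1] at this
  linarith

lemma M_chain {x y z : V → A4} (h1 : (x, y) ∈ Delta (homSpace G C4))
    (h2 : (y, z) ∈ Delta (homSpace G C4)) : M x z = M x y + M y z :=
  hM.2.1 x y z h1 h2

/-- locality of bit-flip increments -/
lemma loc1 {x x' : V → A4} (hx : x ∈ homSpace G C4) (hx' : x' ∈ homSpace G C4)
    {v : V} (h : ∀ u, u = v ∨ G.Adj u v → x u = x' u) :
    M x (bflip x v) = M x' (bflip x' v) := by
  refine hM.2.2 x (bflip x v) x' (bflip x' v) (delta_bflip hx v) (delta_bflip hx' v) ?_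
  refine ⟨{v}, Set.finite_singleton v, ?_, ?_⟩
  · intro u hu
    have hne : u ≠ v := fun hh => hu (hh ▸ rfl)
    exact ⟨(bflip_ne x hne).symm, (bflip_ne x' hne).symm⟩
  · intro u hu
    rcases hu with hu | hu
    · rcases hu with rfl
      have := h u (Or.inl rfl)
      exact ⟨this, by rw [bflip_at, bflip_at, this]⟩
    · obtain ⟨hne, w, hw, hadj⟩ := hu
      rcases Set.mem_singleton_iff.1 hw with rfl
      have hne' : u ≠ w := fun hh => hne (hh ▸ rfl)
      have := h u (Or.inr hadj)
      exact ⟨this, by rw [bflip_ne x hne', bflip_ne x' hne', this]⟩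

/-- locality of component-flip increments -/
lemma loc2 {x x' : V → A4} (hx : x ∈ homSpace G C4) (hx' : x' ∈ homSpace G C4)
    {C : Set V} (hC : CompClosed G C) (hCf : C.Finite)
    (h : ∀ u ∈ C, x u = x' u) :
    M x (pflip C x) = M x' (pflip C x') := by
  refine hM.2.2 x (pflip C x) x' (pflip C x') (delta_pflip hx hC hCf)
    (delta_pflip hx' hC hCf) ?_
  refine ⟨C, hCf, ?_, ?_⟩
  · intro u hu
    exact ⟨(pflip_off hu).symm, (pflip_off hu).symm⟩
  · intro u hu
    rw [boundary_empty hC, Set.union_empty] at hu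
    have := h u hu
    exact ⟨this, by rw [pflip_on hu, pflip_on hu, this]⟩

omit hM in
lemma bflip_comm (x : V → A4) {v u : V} (h : u ≠ v) :
    bflip (bflip x v) u = bflip (bflip x u) v := by
  unfold bflip
  rw [Function.update_of_ne h, Function.update_of_ne (Ne.symm h)]
  exact Function.update_comm (Ne.symm h) _ _ x

lemma M_square {x : V → A4} (hx : x ∈ homSpace G C4) {v u : V} (h : u ≠ v) :
    M x (bflip x v) + M (bflip x v) (bflip (bflip x v) u)
      = M x (bflip x u) + M (bflip x u) (bflip (bflip x u) v) := by
  have h1 : M x (bflip (bflip x v) u) = _ :=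
    M_chain M hM (delta_bflip hx v) (delta_bflip (bflip_mem hx v) u)
  have h2 : M x (bflip (bflip x u) v) = _ :=
    M_chain M hM (delta_bflip hx u) (delta_bflip (bflip_mem hx u) v)
  rw [← h1, ← h2, bflip_comm x h]

lemma M_bflip_self {x : V → A4} (hx : x ∈ homSpace G C4) (v : V) :
    M (bflip x v) (bflip (bflip x v) v) = - M x (bflip x v) := by
  have hb : bflip (bflip x v) v = x := by
    funext w
    rcases eq_or_ne w v with rfl | hw
    · rw [bflip_at, bflip_at, bf_bf]
    · rw [bflip_ne _ hw, bflip_ne _ hw]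
  rw [hb]
  exact M_inv M hM (delta_bflip hx v)

end Cocycle
/-! ### gibbsSum generic lemmas -/

section Finsum
variable {V : Type*} {G : SimpleGraph V}

/-- term function of a gibbs sum -/
noncomputable def tmf (U : ∀ F : Set V, (F → A4) → ℝ) (x y : V → A4) : Set V → ℝ :=
  fun F => U F (F.restrict y) - U F (F.restrict x)

lemma gibbsSum_eq (U : ∀ F : Set V, (F → A4) → ℝ) (x y : V → A4) :
    gibbsSum U x y = ∑ᶠ F : Set V, tmf U x y F := rfl

def nbhd (G : SimpleGraph V) (D : Set V) : Set V := D ∪ ⋃ v ∈ D, {u | G.Adj u v}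

lemma nbhd_finite (hlf : ∀ v : V, (G.neighborSet v).Finite) {D : Set V}
    (hD : D.Finite) : (nbhd G D).Finite := by
  refine hD.union (Set.Finite.biUnion hD fun v _ => ?_)
  have he : {u | G.Adj u v} = G.neighborSet v := by
    ext u; exact ⟨fun h => h.symm, fun h => h.symm⟩
  rw [he]; exact hlf v

lemma restrict_eq_of {x y : V → A4} (F : Set V) (h : ∀ w ∈ F, x w = y w) :
    F.restrict x = F.restrict y := funext fun w => h w.1 w.2

lemma tmf_zero_of_not_clique {U : ∀ F : Set V, (F → A4) → ℝ}
    (hU : IsNNInteraction G U) {F : Set V} (h : ¬(F.Finite ∧ G.IsClique F))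
    (x y : V → A4) : tmf U x y F = 0 := by
  unfold tmf; rw [hU F h, hU F h, sub_self]

lemma tmf_zero_of_eq {U : ∀ F : Set V, (F → A4) → ℝ} {F : Set V} {x y : V → A4}
    (h : ∀ w ∈ F, x w = y w) : tmf U x y F = 0 := by
  unfold tmf; rw [restrict_eq_of F h, sub_self]

lemma tmf_support {U : ∀ F : Set V, (F → A4) → ℝ} (hU : IsNNInteraction G U)
    {x y : V → A4} {D : Set V} (hD : ∀ v, x v ≠ y v → v ∈ D) :
    Function.support (tmf U x y) ⊆ {F | F ⊆ nbhd G D} := by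
  intro F hF
  by_cases hcl : F.Finite ∧ G.IsClique F
  · by_cases hdiff : ∀ w ∈ F, x w = y w
    · exact absurd (tmf_zero_of_eq hdiff) hF
    · push_neg at hdiff
      obtain ⟨w, hwF, hwne⟩ := hdiff
      intro z hz
      rcases eq_or_ne z w with rfl | hzw
      · exact Or.inl (hD _ hwne)
      · exact Or.inr (Set.mem_biUnion (hD _ hwne) (hcl.2 hz hwF hzw))
  · exact absurd (tmf_zero_of_not_clique hU hcl x y) hF

lemma tmf_support_finite {U : ∀ F : Set V, (F → A4) → ℝ} (hU : IsNNInteraction G U)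
    (hlf : ∀ v : V, (G.neighborSet v).Finite) {x y : V → A4}
    (hd : {v | x v ≠ y v}.Finite) : (Function.support (tmf U x y)).Finite := by
  refine Set.Finite.subset ((nbhd_finite hlf hd).finite_subsets) ?_
  exact tmf_support hU (fun v hv => hv)

lemma gibbsSum_self (U : ∀ F : Set V, (F → A4) → ℝ) (x : V → A4) :
    gibbsSum U x x = 0 := by
  rw [gibbsSum_eq]
  have : ∀ F : Set V, tmf U x x F = 0 := fun F => tmf_zero_of_eq (fun w _ => rfl)
  rw [finsum_congr this]; exact finsum_zero

lemma gibbsSum_chain {U : ∀ F : Set V, (F → A4) → ℝ} (hU : IsNNInteraction G U)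
    (hlf : ∀ v : V, (G.neighborSet v).Finite) {x y z : V → A4}
    (h1 : {v | x v ≠ y v}.Finite) (h2 : {v | y v ≠ z v}.Finite) :
    gibbsSum U x z = gibbsSum U x y + gibbsSum U y z := by
  classical
  set D : Set V := {v | x v ≠ y v} ∪ {v | y v ≠ z v} with hDdef
  have hDf : D.Finite := h1.union h2
  have hKf : (nbhd G D).Finite := nbhd_finite hlf hDf
  set s : Finset (Set V) := hKf.finite_subsets.toFinset with hsdef
  have hsub : ∀ {a b : V → A4}, (∀ v, a v ≠ b v → v ∈ D) →
      gibbsSum U a b = ∑ F ∈ s, tmf U a b F := by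
    intro a b hab
    rw [gibbsSum_eq]
    refine finsum_eq_finset_sum_of_support_subset _ ?_
    refine (tmf_support hU hab).trans ?_
    intro F hF
    rw [hsdef, Set.Finite.coe_toFinset]
    exact hF
  have e1 : gibbsSum U x y = ∑ F ∈ s, tmf U x y F :=
    hsub (fun v hv => Or.inl hv)
  have e2 : gibbsSum U y z = ∑ F ∈ s, tmf U y z F :=
    hsub (fun v hv => Or.inr hv)
  have e3 : gibbsSum U x z = ∑ F ∈ s, tmf U x z F := by
    refine hsub (fun v hv => ?_)
    by_cases h : x v = y v
    · exact Or.inr (fun hc => hv (h.trans hc))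
    · exact Or.inl h
  rw [e1, e2, e3, ← Finset.sum_add_distrib]
  refine Finset.sum_congr rfl (fun F _ => ?_)
  unfold tmf; ring

lemma gibbsSum_inv {U : ∀ F : Set V, (F → A4) → ℝ} (hU : IsNNInteraction G U)
    (hlf : ∀ v : V, (G.neighborSet v).Finite) {x y : V → A4}
    (h1 : {v | x v ≠ y v}.Finite) : gibbsSum U y x = -gibbsSum U x y := by
  have h2 : {v | y v ≠ x v}.Finite := by rw [diff_symm]; exact h1
  have := gibbsSum_chain hU hlf h1 h2
  rw [gibbsSum_self] at this
  linarith

lemma clique_subset_bd {S F : Set V} (hcl : G.IsClique F) {w : V} (hwF : w ∈ F)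
    (hwS : w ∈ S) : F ⊆ S ∪ boundary G S := by
  intro z hz
  rcases eq_or_ne z w with rfl | hzw
  · exact Or.inl hwS
  · by_cases hzS : z ∈ S
    · exact Or.inl hzS
    · exact Or.inr ⟨hzS, w, hwS, hcl hz hwF hzw⟩

lemma gibbsSum_sim {U : ∀ F : Set V, (F → A4) → ℝ} (hU : IsNNInteraction G U)
    {x y z w : V → A4} (hsim : MarkovSimilar G x y z w) :
    gibbsSum U x y = gibbsSum U z w := by
  obtain ⟨S, _, hout, hin⟩ := hsim
  rw [gibbsSum_eq, gibbsSum_eq]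
  refine finsum_congr (fun F => ?_)
  by_cases hcl : F.Finite ∧ G.IsClique F
  · by_cases hFS : ∃ a ∈ F, a ∈ S
    · obtain ⟨a, haF, haS⟩ := hFS
      have hFsub : F ⊆ S ∪ boundary G S := clique_subset_bd hcl.2 haF haS
      unfold tmf
      rw [restrict_eq_of F (fun u hu => (hin u (hFsub hu)).1),
        restrict_eq_of F (fun u hu => (hin u (hFsub hu)).2)]
    · push_neg at hFS
      rw [tmf_zero_of_eq (fun u hu => (hout u (hFS u hu)).1),
        tmf_zero_of_eq (fun u hu => (hout u (hFS u hu)).2)]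
  · rw [tmf_zero_of_not_clique hU hcl, tmf_zero_of_not_clique hU hcl]

lemma gibbsSum_add {U₁ U₂ : ∀ F : Set V, (F → A4) → ℝ} (hU₁ : IsNNInteraction G U₁)
    (hU₂ : IsNNInteraction G U₂) (hlf : ∀ v : V, (G.neighborSet v).Finite)
    {x y : V → A4} (hd : {v | x v ≠ y v}.Finite) :
    gibbsSum (fun F p => U₁ F p + U₂ F p) x y = gibbsSum U₁ x y + gibbsSum U₂ x y := by
  rw [gibbsSum_eq, gibbsSum_eq, gibbsSum_eq]
  have he : ∀ F : Set V, tmf (fun F p => U₁ F p + U₂ F p) x y F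
      = tmf U₁ x y F + tmf U₂ x y F := by
    intro F; unfold tmf; ring
  rw [finsum_congr he]
  exact finsum_add_distrib (tmf_support_finite hU₁ hlf hd) (tmf_support_finite hU₂ hlf hd)

end Finsum
/-! ### site and edge interactions -/

section Interactions
variable {V : Type*}

noncomputable def siteU (f : V → A4 → ℝ) : ∀ F : Set V, (F → A4) → ℝ :=
  fun F p => if h : ∃ v : V, F = {v} then
      f h.choose (p ⟨h.choose, (Set.ext_iff.1 h.choose_spec h.choose).2 (Set.mem_singleton _)⟩) else 0

lemma siteU_not {f : V → A4 → ℝ} {F : Set V} (h : ¬∃ v : V, F = {v}) (p : F → A4) :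
    siteU f F p = 0 := dif_neg h

lemma siteU_eval (f : V → A4 → ℝ) (v : V) (x : V → A4) :
    siteU f {v} (Set.restrict {v} x) = f v (x v) := by
  have h : ∃ w : V, ({v} : Set V) = {w} := ⟨v, rfl⟩
  rw [siteU, dif_pos h]
  have hv : v = h.choose := Set.singleton_eq_singleton_iff.1 h.choose_spec
  show f h.choose (x h.choose) = f v (x v)
  rw [← hv]

lemma siteU_NN (G : SimpleGraph V) (f : V → A4 → ℝ) : IsNNInteraction G (siteU f) := by
  intro F hF p
  refine siteU_not (fun h => hF ?_) p
  obtain ⟨v, rfl⟩ := h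
  exact ⟨Set.finite_singleton v, G.isClique_singleton v⟩

variable (G : SimpleGraph V)

noncomputable def edgeU (gg : V → V → A4 → A4 → ℝ) : ∀ F : Set V, (F → A4) → ℝ :=
  fun F p => if h : ∃ e : V × V, G.Adj e.1 e.2 ∧ F = {e.1, e.2} then
      gg h.choose.1 h.choose.2
        (p ⟨h.choose.1, (Set.ext_iff.1 h.choose_spec.2 h.choose.1).2 (Set.mem_insert _ _)⟩)
        (p ⟨h.choose.2, (Set.ext_iff.1 h.choose_spec.2 h.choose.2).2 (Set.mem_insert_of_mem _ rfl)⟩)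
      else 0

lemma edgeU_not {gg : V → V → A4 → A4 → ℝ} {F : Set V}
    (h : ¬∃ e : V × V, G.Adj e.1 e.2 ∧ F = {e.1, e.2}) (p : F → A4) :
    edgeU G gg F p = 0 := dif_neg h

lemma edgeU_not_single {gg : V → V → A4 → A4 → ℝ} (v : V) (p : ({v} : Set V) → A4) :
    edgeU G gg {v} p = 0 := by
  refine edgeU_not G (fun h => ?_) p
  obtain ⟨e, hadj, he⟩ := h
  have h1 : e.1 ∈ ({v} : Set V) := by rw [he]; exact Set.mem_insert _ _
  have h2 : e.2 ∈ ({v} : Set V) := by rw [he]; exact Set.mem_insert_of_mem _ rfl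
  exact hadj.ne (h1.trans h2.symm)

lemma siteU_not_pair {f : V → A4 → ℝ} {u v : V} (huv : u ≠ v)
    (p : ({u, v} : Set V) → A4) : siteU f {u, v} p = 0 := by
  refine siteU_not (fun h => ?_) p
  obtain ⟨w, hw⟩ := h
  have h1 : u ∈ ({w} : Set V) := by rw [← hw]; exact Set.mem_insert _ _
  have h2 : v ∈ ({w} : Set V) := by rw [← hw]; exact Set.mem_insert_of_mem _ rfl
  exact huv (h1.trans h2.symm)

lemma edgeU_eval {gg : V → V → A4 → A4 → ℝ}
    (hsym : ∀ a b c d, gg a b c d = gg b a d c) {u v : V} (hadj : G.Adj u v)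
    (x : V → A4) : edgeU G gg {u, v} (Set.restrict {u, v} x) = gg u v (x u) (x v) := by
  have h : ∃ e : V × V, G.Adj e.1 e.2 ∧ ({u, v} : Set V) = {e.1, e.2} :=
    ⟨(u, v), hadj, rfl⟩
  rw [edgeU, dif_pos h]
  have hspec := h.choose_spec
  have hp : ({u, v} : Set V) = {h.choose.1, h.choose.2} := hspec.2
  have hcases : (h.choose.1 = u ∧ h.choose.2 = v) ∨ (h.choose.1 = v ∧ h.choose.2 = u) := by
    have := (Set.pair_eq_pair_iff.1 hp.symm)
    tauto
  rcases hcases with ⟨h1, h2⟩ | ⟨h1, h2⟩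
  · show gg h.choose.1 h.choose.2 (x h.choose.1) (x h.choose.2) = _
    rw [h1, h2]
  · show gg h.choose.1 h.choose.2 (x h.choose.1) (x h.choose.2) = _
    rw [h1, h2, hsym]

lemma edgeU_NN (gg : V → V → A4 → A4 → ℝ) : IsNNInteraction G (edgeU G gg) := by
  intro F hF p
  refine edgeU_not G (fun h => hF ?_) p
  obtain ⟨e, hadj, rfl⟩ := h
  exact ⟨(Set.finite_singleton e.2).insert e.1, SimpleGraph.isClique_pair.2 (fun _ => hadj)⟩

/-- the combined interaction of a site family and a symmetric edge family -/
noncomputable def mkU (f : V → A4 → ℝ) (gg : V → V → A4 → A4 → ℝ) :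
    ∀ F : Set V, (F → A4) → ℝ :=
  fun F p => siteU f F p + edgeU G gg F p

lemma mkU_NN (f : V → A4 → ℝ) (gg : V → V → A4 → A4 → ℝ) :
    IsNNInteraction G (mkU G f gg) := by
  intro F hF p
  rw [mkU, siteU_NN G f F hF p, edgeU_NN G gg F hF p, add_zero]

end Interactions
/-! ### explicit gibbsSum evaluations -/

section GSEval
variable {V : Type*} {G : SimpleGraph V}

lemma gibbsSum_upd (hlf : ∀ v : V, (G.neighborSet v).Finite)
    (f : V → A4 → ℝ) {gg : V → V → A4 → A4 → ℝ}
    (hsym : ∀ a b c d, gg a b c d = gg b a d c) (x : V → A4) (v : V) (b : A4) :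
    gibbsSum (mkU G f gg) x (Function.update x v b)
      = (f v b - f v (x v))
        + ∑ u ∈ (hlf v).toFinset, (gg v u b (x u) - gg v u (x v) (x u)) := by
  classical
  set y := Function.update x v b with hy
  have hyv : y v = b := Function.update_self _ _ _
  have hyne : ∀ u : V, u ≠ v → y u = x u := fun u hu => Function.update_of_ne hu _ _
  set s : Finset (Set V) :=
    insert {v} ((hlf v).toFinset.image (fun u => ({v, u} : Set V))) with hs
  have hsupp : Function.support (tmf (mkU G f gg) x y) ⊆ ↑s := by
    intro F hF
    simp only [Function.mem_support] at hF
    have hvF : v ∈ F := by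
      by_contra hv
      refine hF (tmf_zero_of_eq (fun w hw => ?_))
      exact (hyne w (fun hh => hv (hh ▸ hw))).symm
    by_cases h1 : ∃ w : V, F = {w}
    · obtain ⟨w, rfl⟩ := h1
      rcases Set.mem_singleton_iff.1 hvF with rfl
      exact Finset.mem_insert_self _ _
    · by_cases h2 : ∃ e : V × V, G.Adj e.1 e.2 ∧ F = {e.1, e.2}
      · obtain ⟨e, hadj, rfl⟩ := h2
        rcases hvF with rfl | hv2
        · refine Finset.mem_insert_of_mem (Finset.mem_image.2 ⟨e.2, ?_, rfl⟩)
          rw [Set.Finite.mem_toFinset]; exact hadj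
        · rcases Set.mem_singleton_iff.1 hv2 with rfl
          refine Finset.mem_insert_of_mem (Finset.mem_image.2 ⟨e.1, ?_, ?_⟩)
          · rw [Set.Finite.mem_toFinset]; exact hadj.symm
          · exact (Set.pair_comm e.1 (e.2 : V)).symm ▸ Set.pair_comm e.1 e.2
      · exfalso; apply hF
        unfold tmf mkU
        rw [siteU_not h1, siteU_not h1, edgeU_not G h2, edgeU_not G h2]
        ring
  rw [gibbsSum_eq, finsum_eq_finset_sum_of_support_subset _ hsupp, hs]
  have hnot : ({v} : Set V) ∉ (hlf v).toFinset.image (fun u => ({v, u} : Set V)) := by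
    intro hmem
    obtain ⟨u, hu, hequ⟩ := Finset.mem_image.1 hmem
    rw [Set.Finite.mem_toFinset] at hu
    have : u ∈ ({v} : Set V) := hequ ▸ Set.mem_insert_of_mem _ rfl
    exact (G.ne_of_adj hu).symm (Set.mem_singleton_iff.1 this)
  rw [Finset.sum_insert hnot]
  have hterm1 : tmf (mkU G f gg) x y {v} = f v b - f v (x v) := by
    unfold tmf mkU
    rw [siteU_eval, siteU_eval, edgeU_not_single, edgeU_not_single, hyv]
    ring
  have hinj : ∀ a ∈ (hlf v).toFinset, ∀ b ∈ (hlf v).toFinset,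
      ({v, a} : Set V) = {v, b} → a = b := by
    intro a ha b hb hab
    rw [Set.Finite.mem_toFinset] at ha hb
    have : a ∈ ({v, b} : Set V) := hab ▸ Set.mem_insert_of_mem _ rfl
    rcases this with h | h
    · exact absurd h.symm (G.ne_of_adj ha)
    · exact h
  rw [Finset.sum_image hinj]
  rw [hterm1]
  congr 1
  refine Finset.sum_congr rfl (fun u hu => ?_)
  rw [Set.Finite.mem_toFinset] at hu
  unfold tmf mkU
  rw [siteU_not_pair (G.ne_of_adj hu), siteU_not_pair (G.ne_of_adj hu),
    edgeU_eval G hsym hu, edgeU_eval G hsym hu, hyv, hyne u (G.ne_of_adj hu).symm]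
  ring

lemma gibbsSum_pflip_site (f : V → A4 → ℝ) {C : Set V} (hCf : C.Finite) (x : V → A4) :
    gibbsSum (siteU f : ∀ F : Set V, (F → A4) → ℝ) x (pflip C x)
      = ∑ w ∈ hCf.toFinset, (f w (pf (x w)) - f w (x w)) := by
  classical
  set y := pflip C x with hy
  set s : Finset (Set V) := hCf.toFinset.image (fun w => ({w} : Set V)) with hs
  have hsupp : Function.support (tmf (siteU f) x y) ⊆ ↑s := by
    intro F hF
    simp only [Function.mem_support] at hF
    by_cases h1 : ∃ w : V, F = {w}
    · obtain ⟨w, rfl⟩ := h1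
      have hwC : w ∈ C := by
        by_contra hw
        refine hF (tmf_zero_of_eq (fun a ha => ?_))
        rcases Set.mem_singleton_iff.1 ha with rfl
        exact (pflip_off hw).symm
      exact Finset.mem_coe.2 (Finset.mem_image.2 ⟨w, Set.Finite.mem_toFinset _ |>.2 hwC, rfl⟩)
    · exfalso; apply hF
      unfold tmf
      rw [siteU_not h1, siteU_not h1, sub_self]
  rw [gibbsSum_eq, finsum_eq_finset_sum_of_support_subset _ hsupp, hs]
  have hinj : ∀ a ∈ hCf.toFinset, ∀ b ∈ hCf.toFinset, ({a} : Set V) = {b} → a = b :=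
    fun a _ b _ hab => Set.singleton_eq_singleton_iff.1 hab
  rw [Finset.sum_image hinj]
  refine Finset.sum_congr rfl (fun w hw => ?_)
  rw [Set.Finite.mem_toFinset] at hw
  unfold tmf
  rw [siteU_eval, siteU_eval, hy, pflip_on hw]

end GSEval
/-! ### the construction of the interaction from a Markov cocycle -/

section Construction
variable {V : Type*} {G : SimpleGraph V}

lemma fin2_of_ne : ∀ a b : Fin 2, a ≠ b → a = b + 1 := by decide
lemma emb_par_emb : ∀ s : Fin 2, emb (par (emb s)) = emb s := by decide

noncomputable def zeroed (x : V → A4) (u : V) : V → A4 :=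
  Function.update x u (emb (par (x u)))

lemma zeroed_mem {x : V → A4} (hx : x ∈ homSpace G C4) (u : V) :
    zeroed x u ∈ homSpace G C4 := upd_mem hx (par_emb _)

lemma zeroed_eq_bflip {x : V → A4} {u : V} (h : x u ≠ emb (par (x u))) :
    zeroed x u = bflip x u := by
  unfold zeroed bflip
  rw [bz_eq_bf _ h]

lemma zeroed_eq_self {x : V → A4} {u : V} (h : x u = emb (par (x u))) :
    zeroed x u = x := by
  unfold zeroed
  rw [← h]
  exact Function.update_eq_self _ _

variable (ε : V → Fin 2) (M : (V → A4) → (V → A4) → ℝ)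

noncomputable def phi (v : V) (c : A4) : ℝ :=
  M (base ε v c) (bflip (base ε v c) v)

noncomputable def kv (v u : V) (c d : A4) : ℝ :=
  M (Function.update (base ε v c) u d)
    (bflip (Function.update (base ε v c) u d) v)
  - M (zeroed (Function.update (base ε v c) u d) u)
      (bflip (zeroed (Function.update (base ε v c) u d) u) v)

variable (hε : ∀ u w, G.Adj u w → ε u ≠ ε w)
variable (hM : IsMarkovCocycle G (homSpace G C4) M)
include hε hM

/-- well-definedness of `phi` -/
lemma phi_wd {x : V → A4} (hx : x ∈ homSpace G C4) {v : V}
    (hnb : ∀ u, G.Adj v u → x u = emb (par (x u))) :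
    M x (bflip x v) = phi ε M v (x v) := by
  refine loc1 M hM hx (base_mem ε hε v (x v)) (fun u hu => ?_)
  rcases hu with rfl | hadj
  · rw [base_at]
  · have hadj' := hadj.symm
    rw [base_nbr ε hε hadj']
    have hpar : par (x u) = par (x v) + 1 :=
      fin2_of_ne _ _ ((mem_hs G).1 hx u v hadj)
    rw [hnb u hadj', hpar]

/-- key locality lemma for pair increments -/
lemma K1 {x : V → A4} (hx : x ∈ homSpace G C4) {v u : V} (hadj : G.Adj v u) :
    M x (bflip x v) - M (zeroed x u) (bflip (zeroed x u) v)
      = kv ε M v u (x v) (x u) := by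
  have hpar : par (x u) = par (x v) + 1 := fin2_of_ne _ _ ((mem_hs G).1 hx u v hadj.symm)
  set c := x v with hc
  set d := x u with hd
  set t := Function.update (base ε v c) u d with ht
  have htv : t v = c := by rw [ht, Function.update_of_ne hadj.ne, base_at]
  have htu : t u = d := Function.update_self _ _ _
  have ht_mem : t ∈ homSpace G C4 := by
    refine upd_mem (base_mem ε hε v c) ?_
    rw [base_nbr ε hε hadj, par_emb]; exact hpar
  by_cases hd0 : d = emb (par d)
  · have h1 : zeroed x u = x := zeroed_eq_self (by rw [← hd]; exact hd0)
    have h2 : zeroed t u = t := by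
      refine zeroed_eq_self ?_
      rw [htu]; exact hd0
    rw [kv, ← ht, h1, h2]
    ring
  · -- the nondegenerate case
    have hbz : ∀ y : V → A4, y u = d → zeroed y u = bflip y u := by
      intro y hy
      refine zeroed_eq_bflip ?_
      rw [hy]; exact hd0
    set x₁ := fun w => if w = v ∨ G.Adj v w then x w else t w with hx₁def
    have hx₁v : x₁ v = c := if_pos (Or.inl rfl)
    have hx₁u : x₁ u = d := if_pos (Or.inr hadj)
    have hx₁mem : x₁ ∈ homSpace G C4 := by
      refine parity_replace ht_mem (fun w => ?_)
      by_cases h : w = v ∨ G.Adj v w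
      · rw [hx₁def]; simp only [if_pos h]
        rcases h with rfl | hadj'
        · rw [htv]
        · rcases eq_or_ne w u with rfl | hwu
          · rw [htu]
          · rw [ht, Function.update_of_ne hwu, base_nbr ε hε hadj']
            rw [par_emb]
            exact fin2_of_ne _ _ ((mem_hs G).1 hx w v hadj'.symm)
      · rw [hx₁def]; simp only [if_neg h]
    have hagree1 : ∀ w, w = v ∨ G.Adj w v → x w = x₁ w := by
      intro w hw
      rw [hx₁def]
      have : w = v ∨ G.Adj v w := by
        rcases hw with rfl | hadj'; exact Or.inl rfl; exact Or.inr hadj'.symm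
      simp only [if_pos this]
    have hagree2 : ∀ w, w = u ∨ G.Adj w u → x₁ w = t w := by
      intro w hw
      rcases hw with rfl | hadj'
      · rw [hx₁u, htu]
      · rcases eq_or_ne w v with rfl | hwv
        · rw [hx₁v, htv]
        · have hnot : ¬(w = v ∨ G.Adj v w) := by
            rintro (rfl | hvw)
            · exact hwv rfl
            · exact triangle_free ε hε hvw hadj' hadj
          rw [hx₁def]; simp only [if_neg hnot]
    -- the four loc1 steps
    have E1 : M x (bflip x v) = M x₁ (bflip x₁ v) := loc1 M hM hx hx₁mem hagree1
    have E2 : M (bflip x u) (bflip (bflip x u) v)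
        = M (bflip x₁ u) (bflip (bflip x₁ u) v) := by
      refine loc1 M hM (bflip_mem hx u) (bflip_mem hx₁mem u) (fun w hw => ?_)
      rcases eq_or_ne w u with rfl | hwu
      · rw [bflip_at, bflip_at, hx₁u]
      · rw [bflip_ne _ hwu, bflip_ne _ hwu]
        exact hagree1 w hw
    have E4 : M x₁ (bflip x₁ u) = M t (bflip t u) := loc1 M hM hx₁mem ht_mem hagree2
    have E5 : M (bflip x₁ v) (bflip (bflip x₁ v) u)
        = M (bflip t v) (bflip (bflip t v) u) := by
      refine loc1 M hM (bflip_mem hx₁mem v) (bflip_mem ht_mem v) (fun w hw => ?_)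
      rcases eq_or_ne w v with rfl | hwv
      · rw [bflip_at, bflip_at, hx₁v, htv]
      · rw [bflip_ne _ hwv, bflip_ne _ hwv]
        exact hagree2 w hw
    have E3 := M_square M hM hx₁mem hadj.ne'
    have E6 := M_square M hM ht_mem hadj.ne'
    have hzx : zeroed x u = bflip x u := hbz x hd
    have hzt : zeroed t u = bflip t u := hbz t htu
    rw [kv, ← ht, hzx, hzt]
    linarith

end Construction
section Construction2
variable {V : Type*} {G : SimpleGraph V}
variable (ε : V → Fin 2) (M : (V → A4) → (V → A4) → ℝ)

lemma kv_zero (v u : V) (c : A4) {d : A4} (hd0 : d = emb (par d)) :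
    kv ε M v u c d = 0 := by
  have h2 : zeroed (Function.update (base ε v c) u d) u
      = Function.update (base ε v c) u d := by
    refine zeroed_eq_self ?_
    rw [Function.update_self]; exact hd0
  rw [kv, h2]
  ring

variable (hε : ∀ u w, G.Adj u w → ε u ≠ ε w)
variable (hM : IsMarkovCocycle G (homSpace G C4) M)
include hε hM

lemma phi_inv (v : V) (c : A4) : phi ε M v (bf c) = - phi ε M v c := by
  set y := base ε v c with hy
  have hymem : y ∈ homSpace G C4 := base_mem ε hε v c
  have h1 : M (bflip y v) (bflip (bflip y v) v) = phi ε M v ((bflip y v) v) := by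
    refine phi_wd ε M hε hM (bflip_mem hymem v) (fun u hu => ?_)
    rw [bflip_ne _ (G.ne_of_adj hu).symm, hy, base_nbr ε hε hu, emb_par_emb]
  rw [bflip_at, hy, base_at] at h1
  rw [← h1]
  exact M_bflip_self M hM hymem v

/-- `R¹` : flipping the bit in the first slot negates `kv` -/
lemma kv_flip1 {v u : V} (hadj : G.Adj v u) {c d : A4} (hpar : par d = par c + 1) :
    kv ε M v u (bf c) d = - kv ε M v u c d := by
  set t := Function.update (base ε v c) u d with ht
  have htv : t v = c := by rw [ht, Function.update_of_ne hadj.ne, base_at]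
  have htu : t u = d := Function.update_self _ _ _
  have ht_mem : t ∈ homSpace G C4 := by
    refine upd_mem (base_mem ε hε v c) ?_
    rw [base_nbr ε hε hadj, par_emb]; exact hpar
  set z := bflip t v with hz
  have hzv : z v = bf c := by rw [hz, bflip_at, htv]
  have hzu : z u = d := by rw [hz, bflip_ne _ hadj.ne', htu]
  have hzmem : z ∈ homSpace G C4 := bflip_mem ht_mem v
  have hK := K1 ε M hε hM hzmem hadj
  rw [hzv, hzu] at hK
  set w := zeroed t u with hw
  have hwmem : w ∈ homSpace G C4 := zeroed_mem ht_mem u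
  have hcomm : zeroed z u = bflip w v := by
    have hwv : w v = c := by rw [hw, zeroed, Function.update_of_ne hadj.ne, htv]
    show Function.update z u (emb (par (z u))) = Function.update w v (bf (w v))
    rw [hzu, hwv, hz, bflip, htv, hw, zeroed, htu]
    exact Function.update_comm hadj.ne _ _ _
  have e1 : M z (bflip z v) = - M t (bflip t v) := M_bflip_self M hM ht_mem v
  have e2 : M (zeroed z u) (bflip (zeroed z u) v) = - M w (bflip w v) := by
    rw [hcomm]
    exact M_bflip_self M hM hwmem v
  rw [e1, e2] at hK
  rw [← hK, kv, ← ht, ← hw]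
  ring

/-- `R²` : swapping the roles of the two sites -/
lemma kv_sym {v u : V} (hadj : G.Adj v u) {c d : A4} (hpar : par d = par c + 1)
    (hc0 : c = emb (par c)) (hd1 : d ≠ emb (par d)) :
    kv ε M u v d (bf c) = - kv ε M v u c d := by
  set t := Function.update (base ε v c) u d with ht
  have htv : t v = c := by rw [ht, Function.update_of_ne hadj.ne, base_at]
  have htu : t u = d := Function.update_self _ _ _
  have ht_mem : t ∈ homSpace G C4 := by
    refine upd_mem (base_mem ε hε v c) ?_
    rw [base_nbr ε hε hadj, par_emb]; exact hpar
  have hzt : zeroed t u = bflip t u := zeroed_eq_bflip (by rw [htu]; exact hd1)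
  have S1 := K1 ε M hε hM ht_mem hadj
  rw [htv, htu, hzt] at S1
  set z := bflip t v with hz
  have hzmem : z ∈ homSpace G C4 := bflip_mem ht_mem v
  have hzv : z v = bf c := by rw [hz, bflip_at, htv]
  have hzu : z u = d := by rw [hz, bflip_ne _ hadj.ne', htu]
  have S2 := K1 ε M hε hM hzmem hadj.symm
  rw [hzu, hzv] at S2
  have hzz : zeroed z v = t := by
    show Function.update z v (emb (par (z v))) = t
    rw [hzv, par_bf, ← hc0, hz, bflip, htv, Function.update_idem]
    rw [← htv]
    exact Function.update_eq_self _ _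
  rw [hzz] at S2
  have SQ := M_square M hM ht_mem hadj.ne'
  rw [← S2, ← S1]
  have hflip : bflip t v = z := rfl
  rw [hflip] at SQ
  linarith

/-- the telescope decomposition of single-site increments -/
lemma telescope (hlf : ∀ v : V, (G.neighborSet v).Finite) :
    ∀ x ∈ homSpace G C4, ∀ v : V,
      M x (bflip x v) = phi ε M v (x v)
        + ∑ u ∈ (hlf v).toFinset, kv ε M v u (x v) (x u) := by
  classical
  suffices h : ∀ n : ℕ, ∀ x ∈ homSpace G C4, ∀ v : V,
      ((hlf v).toFinset.filter (fun u => x u ≠ emb (par (x u)))).card ≤ n →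
      M x (bflip x v) = phi ε M v (x v)
        + ∑ u ∈ (hlf v).toFinset, kv ε M v u (x v) (x u) by
    intro x hx v
    exact h _ x hx v le_rfl
  intro n
  induction n with
  | zero =>
    intro x hx v hcard
    have hempty : ∀ u ∈ (hlf v).toFinset, x u = emb (par (x u)) := by
      intro u hu
      by_contra hne
      have : u ∈ (hlf v).toFinset.filter (fun u => x u ≠ emb (par (x u))) :=
        Finset.mem_filter.2 ⟨hu, hne⟩
      rw [Finset.card_eq_zero.1 (Nat.le_zero.1 hcard)] at this
      exact absurd this (Finset.notMem_empty u)
    have h1 : M x (bflip x v) = phi ε M v (x v) := by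
      refine phi_wd ε M hε hM hx (fun u hu => ?_)
      exact hempty u (Set.Finite.mem_toFinset _ |>.2 hu)
    rw [h1]
    have h2 : ∀ u ∈ (hlf v).toFinset, kv ε M v u (x v) (x u) = 0 := by
      intro u hu
      exact kv_zero ε M v u (x v) (hempty u hu)
    rw [Finset.sum_eq_zero h2]
    ring
  | succ n ih =>
    intro x hx v hcard
    rcases Finset.eq_empty_or_nonempty
      ((hlf v).toFinset.filter (fun u => x u ≠ emb (par (x u)))) with hem | ⟨u, hu⟩
    · refine ih x hx v ?_
      rw [hem, Finset.card_empty]; exact Nat.zero_le n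
    · have huNF : u ∈ (hlf v).toFinset := (Finset.mem_filter.1 hu).1
      have hubit : x u ≠ emb (par (x u)) := (Finset.mem_filter.1 hu).2
      have hadj : G.Adj v u := Set.Finite.mem_toFinset _ |>.1 huNF
      set x' := zeroed x u with hx'
      have hx'mem : x' ∈ homSpace G C4 := zeroed_mem hx u
      have hx'u : x' u = emb (par (x u)) := Function.update_self _ _ _
      have hx'ne : ∀ w, w ≠ u → x' w = x w := fun w hw => Function.update_of_ne hw _ _
      have hx'v : x' v = x v := hx'ne v hadj.ne
      have hK := K1 ε M hε hM hx hadj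
      have hfilter : (hlf v).toFinset.filter (fun w => x' w ≠ emb (par (x' w)))
          = ((hlf v).toFinset.filter (fun w => x w ≠ emb (par (x w)))).erase u := by
        ext w
        rw [Finset.mem_erase, Finset.mem_filter, Finset.mem_filter]
        constructor
        · rintro ⟨hw1, hw2⟩
          have hwu : w ≠ u := by
            rintro rfl
            rw [hx'u] at hw2
            exact hw2 (by rw [emb_par_emb])
          rw [hx'ne w hwu] at hw2
          exact ⟨hwu, hw1, hw2⟩
        · rintro ⟨hwu, hw1, hw2⟩
          rw [← hx'ne w hwu] at hw2
          exact ⟨hw1, hw2⟩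
      have hcard' : ((hlf v).toFinset.filter (fun w => x' w ≠ emb (par (x' w)))).card ≤ n := by
        rw [hfilter]
        have := Finset.card_erase_of_mem hu
        omega
      have hIH := ih x' hx'mem v hcard'
      rw [hx'v] at hIH
      have hzero : kv ε M v u (x v) (x' u) = 0 := by
        rw [hx'u]
        exact kv_zero ε M v u (x v) (by rw [emb_par_emb])
      have hs1 : ∑ w ∈ (hlf v).toFinset, kv ε M v w (x v) (x' w)
          = kv ε M v u (x v) (x' u)
            + ∑ w ∈ (hlf v).toFinset.erase u, kv ε M v w (x v) (x' w) :=
        (Finset.add_sum_erase _ _ huNF).symm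
      have hs2 : ∑ w ∈ (hlf v).toFinset.erase u, kv ε M v w (x v) (x' w)
          = ∑ w ∈ (hlf v).toFinset.erase u, kv ε M v w (x v) (x w) := by
        refine Finset.sum_congr rfl (fun w hw => ?_)
        rw [hx'ne w (Finset.mem_erase.1 hw).1]
      have hs3 : ∑ w ∈ (hlf v).toFinset, kv ε M v w (x v) (x w)
          = kv ε M v u (x v) (x u)
            + ∑ w ∈ (hlf v).toFinset.erase u, kv ε M v w (x v) (x w) :=
        (Finset.add_sum_erase _ _ huNF).symm
      rw [hs1, hzero, hs2] at hIH
      rw [hs3]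
      linarith

end Construction2
section Construction3
variable {V : Type*} {G : SimpleGraph V}
variable (ε : V → Fin 2) (M : (V → A4) → (V → A4) → ℝ)

lemma bf_bit1 : ∀ c : A4, c = emb (par c) → bf c ≠ emb (par (bf c)) := by decide
lemma bf_bit0 : ∀ c : A4, c ≠ emb (par c) → bf c = emb (par (bf c)) := by decide
lemma fin2_swap : ∀ a b : Fin 2, a = b + 1 → b = a + 1 := by decide

noncomputable def rawg (v u : V) (c d : A4) : ℝ :=
  if c ≠ emb (par c) then kv ε M v u (bf c) d else 0

noncomputable def ggsym (v u : V) (c d : A4) : ℝ :=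
  (rawg ε M v u c d + rawg ε M u v d c) / 2

lemma ggsym_symm : ∀ a b : V, ∀ c d : A4,
    ggsym ε M a b c d = ggsym ε M b a d c := by
  intro a b c d; unfold ggsym; ring

noncomputable def f0 (v : V) (c : A4) : ℝ :=
  if c ≠ emb (par c) then phi ε M v (bf c) else 0

variable (hε : ∀ u w, G.Adj u w → ε u ≠ ε w)
variable (hM : IsMarkovCocycle G (homSpace G C4) M)
include hε hM

lemma f0_grad (v : V) (c : A4) : f0 ε M v (bf c) - f0 ε M v c = phi ε M v c := by
  by_cases h : c = emb (par c)
  · rw [f0, f0, if_pos (bf_bit1 c h), if_neg (not_not_intro h), bf_bf]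
    ring
  · rw [f0, f0, if_neg (not_not_intro (bf_bit0 c h)), if_pos h,
      phi_inv ε M hε hM v c]
    ring

lemma gg_grad {v u : V} (hadj : G.Adj v u) {c d : A4} (hpar : par d = par c + 1) :
    ggsym ε M v u (bf c) d - ggsym ε M v u c d = kv ε M v u c d := by
  have hparc : par c = par d + 1 := fin2_swap _ _ hpar
  have hA : rawg ε M v u (bf c) d - rawg ε M v u c d = kv ε M v u c d := by
    by_cases h : c = emb (par c)
    · rw [rawg, rawg, if_pos (bf_bit1 c h), if_neg (not_not_intro h), bf_bf]
      ring
    · rw [rawg, rawg, if_neg (not_not_intro (bf_bit0 c h)), if_pos h,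
        kv_flip1 ε M hε hM hadj hpar]
      ring
  have hB : rawg ε M u v d (bf c) - rawg ε M u v d c = kv ε M v u c d := by
    by_cases hd : d = emb (par d)
    · rw [rawg, rawg, if_neg (not_not_intro hd), if_neg (not_not_intro hd),
        kv_zero ε M v u c hd]
      ring
    · rw [rawg, rawg, if_pos hd, if_pos hd]
      by_cases hc : c = emb (par c)
      · have h2 : kv ε M u v (bf d) c = 0 := kv_zero ε M u v (bf d) hc
        have e1 : kv ε M u v (bf d) (bf c) = - kv ε M u v d (bf c) :=
          kv_flip1 ε M hε hM hadj.symm (by rw [par_bf]; exact hparc)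
        have e2 : kv ε M u v d (bf c) = - kv ε M v u c d :=
          kv_sym ε M hε hM hadj hpar hc hd
        rw [h2, e1, e2]; ring
      · have h2 : kv ε M u v (bf d) (bf c) = 0 :=
          kv_zero ε M u v (bf d) (bf_bit0 c hc)
        have e1 : kv ε M u v (bf d) c = - kv ε M u v d c :=
          kv_flip1 ε M hε hM hadj.symm hparc
        have e2 : kv ε M u v d (bf (bf c)) = - kv ε M v u (bf c) d :=
          kv_sym ε M hε hM hadj (by rw [par_bf]; exact hpar) (bf_bit0 c hc) hd
        rw [bf_bf] at e2
        have e3 : kv ε M v u (bf c) d = - kv ε M v u c d :=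
          kv_flip1 ε M hε hM hadj hpar
        rw [h2, e1, e2, e3]; ring
  unfold ggsym
  linarith

/-- identity (A): single-site increments of `M` agree with the gibbs sums -/
lemma identityA (hlf : ∀ v : V, (G.neighborSet v).Finite) (f : V → A4 → ℝ)
    (hfgrad : ∀ v c, f v (bf c) - f v c = phi ε M v c) :
    ∀ x ∈ homSpace G C4, ∀ v : V,
      M x (bflip x v) = gibbsSum (mkU G f (ggsym ε M)) x (bflip x v) := by
  intro x hx v
  have hb : bflip x v = Function.update x v (bf (x v)) := rfl
  rw [hb, gibbsSum_upd hlf f (ggsym_symm ε M) x v (bf (x v)), ← hb]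
  rw [telescope ε M hε hM hlf x hx v]
  rw [show f v (bf (x v)) - f v (x v) = phi ε M v (x v) from hfgrad v (x v)]
  congr 1
  refine Finset.sum_congr rfl (fun u hu => ?_)
  have hadj : G.Adj v u := Set.Finite.mem_toFinset _ |>.1 hu
  exact (gg_grad ε M hε hM hadj (fin2_of_ne _ _ ((mem_hs G).1 hx u v hadj.symm))).symm

end Construction3
section DMachine
variable {V : Type*} {G : SimpleGraph V}
variable (M : (V → A4) → (V → A4) → ℝ)

noncomputable def Dfun (U : ∀ F : Set V, (F → A4) → ℝ) (C : Set V) (x : V → A4) : ℝ :=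
  M x (pflip C x) - gibbsSum U x (pflip C x)

lemma pf_bf_comm : ∀ c : A4, pf (bf c) = bf (pf c) := by decide
lemma par_pf_emb : ∀ s : Fin 2, par (pf (emb s)) ≠ s := by decide
lemma fin2_add_flip : ∀ a b : Fin 2, (a + 1) + (b + 1) = a + b := by decide
lemma fin2_sum_zero : ∀ a b c : Fin 2, a + b = c + c → a = b := by decide

lemma diff_pflip_subset (C : Set V) (x : V → A4) : {a | x a ≠ pflip C x a} ⊆ C := by
  intro a ha
  by_contra h
  exact ha (pflip_off h).symm

variable {U : ∀ F : Set V, (F → A4) → ℝ}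
variable (hM : IsMarkovCocycle G (homSpace G C4) M)
variable (hU : IsNNInteraction G U)
variable (hlf : ∀ v : V, (G.neighborSet v).Finite)
include hM hU hlf

lemma D_upd (hA : ∀ x ∈ homSpace G C4, ∀ v : V,
      M x (bflip x v) = gibbsSum U x (bflip x v))
    {C : Set V} (hC : CompClosed G C) (hCf : C.Finite)
    {x : V → A4} (hx : x ∈ homSpace G C4) (w : V) {b : A4}
    (hb : par b = par (x w)) :
    Dfun M U C (Function.update x w b) = Dfun M U C x := by
  rcases eq_or_ne b (x w) with rfl | hne
  · rw [Function.update_eq_self]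
  · have hbf : b = bf (x w) := eq_bf_of_par_eq (x w) b hb.symm (Ne.symm hne)
    subst hbf
    have hy : Function.update x w (bf (x w)) = bflip x w := rfl
    rw [hy]
    set y := bflip x w with hydef
    set z := pflip C x with hzdef
    have hymem : y ∈ homSpace G C4 := bflip_mem hx w
    have hzmem : z ∈ homSpace G C4 := pflip_mem hC hx
    have hcomm : pflip C y = bflip z w := by
      funext a
      rcases eq_or_ne a w with rfl | haw
      · by_cases haC : a ∈ C
        · rw [pflip_on haC, bflip_at, hydef, bflip_at, hzdef, pflip_on haC, pf_bf_comm]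
        · rw [pflip_off haC, bflip_at, hydef, bflip_at, hzdef, pflip_off haC]
      · by_cases haC : a ∈ C
        · rw [pflip_on haC, bflip_ne _ haw, hydef, bflip_ne _ haw, hzdef, pflip_on haC]
        · rw [pflip_off haC, bflip_ne _ haw, hydef, bflip_ne _ haw, hzdef, pflip_off haC]
    have hdxy : {a | x a ≠ y a}.Finite :=
      Set.Finite.subset (Set.finite_singleton w) (diff_upd_subset x w _)
    have hdypy : {a | y a ≠ pflip C y a}.Finite :=
      Set.Finite.subset hCf (diff_pflip_subset C y)
    have hdxz : {a | x a ≠ z a}.Finite :=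
      Set.Finite.subset hCf (diff_pflip_subset C x)
    have hdzbz : {a | z a ≠ bflip z w a}.Finite :=
      Set.Finite.subset (Set.finite_singleton w) (diff_upd_subset z w _)
    have c1 : M x (pflip C y) = M x y + M y (pflip C y) :=
      M_chain M hM (delta_bflip hx w) (delta_pflip hymem hC hCf)
    have c2 : M x (pflip C y) = M x z + M z (bflip z w) := by
      rw [hcomm]
      exact M_chain M hM (delta_pflip hx hC hCf) (delta_bflip hzmem w)
    have g1 : gibbsSum U x (pflip C y) = gibbsSum U x y + gibbsSum U y (pflip C y) :=
      gibbsSum_chain hU hlf hdxy hdypy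
    have g2 : gibbsSum U x (pflip C y) = gibbsSum U x z + gibbsSum U z (bflip z w) := by
      rw [hcomm]
      exact gibbsSum_chain hU hlf hdxz hdzbz
    have a1 : M x y = gibbsSum U x y := hA x hx w
    have a2 : M z (bflip z w) = gibbsSum U z (bflip z w) := hA z hzmem w
    unfold Dfun
    linarith

omit hlf

lemma D_loc {C : Set V} (hC : CompClosed G C) (hCf : C.Finite)
    {x x' : V → A4} (hx : x ∈ homSpace G C4) (hx' : x' ∈ homSpace G C4)
    (h : ∀ w ∈ C, x w = x' w) :
    Dfun M U C x = Dfun M U C x' := by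
  have hsim : MarkovSimilar G x (pflip C x) x' (pflip C x') := by
    refine ⟨C, hCf, fun u hu => ⟨(pflip_off hu).symm, (pflip_off hu).symm⟩, fun u hu => ?_⟩
    rw [boundary_empty hC, Set.union_empty] at hu
    exact ⟨h u hu, by rw [pflip_on hu, pflip_on hu, h u hu]⟩
  have hMpart := hM.2.2 x (pflip C x) x' (pflip C x')
    (delta_pflip hx hC hCf) (delta_pflip hx' hC hCf) hsim
  have hGpart := gibbsSum_sim hU hsim
  unfold Dfun
  rw [hMpart, hGpart]

include hlf

lemma D_inv {C : Set V} (hC : CompClosed G C) (hCf : C.Finite)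
    {x : V → A4} (hx : x ∈ homSpace G C4) :
    Dfun M U C (pflip C x) = - Dfun M U C x := by
  have hpmem := pflip_mem hC hx
  have h1 : M (pflip C x) (pflip C (pflip C x)) = - M x (pflip C x) := by
    rw [pflip_pflip]
    exact M_inv M hM (delta_pflip hx hC hCf)
  have h2 : gibbsSum U (pflip C x) (pflip C (pflip C x)) = - gibbsSum U x (pflip C x) := by
    rw [pflip_pflip]
    exact gibbsSum_inv hU hlf (Set.Finite.subset hCf (diff_pflip_subset C x))
  unfold Dfun
  rw [h1, h2]
  ring

end DMachine
section Phase
variable {V : Type*} {G : SimpleGraph V}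

lemma par_pf_eq : ∀ c : A4, par (pf c) = par c + 1 := by decide
lemma fin2_phase1 : ∀ a b c d : Fin 2, a + b = c + d → c ≠ d → a + 1 = b := by decide

lemma phase_const (ε : V → Fin 2) (hε : ∀ u w, G.Adj u w → ε u ≠ ε w)
    {x : V → A4} (hx : x ∈ homSpace G C4) {v u : V} (hu : u ∈ comp G v) :
    par (x u) + ε u = par (x v) + ε v := by
  obtain ⟨p⟩ := hu
  induction p with
  | nil => rfl
  | @cons a b u h q ih =>
    have h1 : par (x b) = par (x a) + 1 :=
      fin2_of_ne _ _ ((mem_hs G).1 hx b a h.symm)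
    have h2 : ε b = ε a + 1 := fin2_of_ne _ _ (hε b a h.symm)
    rw [ih, h1, h2, fin2_add_flip]
end Phase

section FullDef
variable {V : Type*}
variable (G : SimpleGraph V) (ε : V → Fin 2) (M : (V → A4) → (V → A4) → ℝ)

noncomputable def U0 : ∀ F : Set V, (F → A4) → ℝ := mkU G (f0 ε M) (ggsym ε M)

noncomputable def dval (C : Set V) : ℝ := Dfun M (U0 G ε M) C (xcan ε)

noncomputable def dvf (v : V) : ℝ :=
  if (comp G v).Finite then dval G ε M (comp G v) / (comp G v).ncard else 0

noncomputable def corr (v : V) (c : A4) : ℝ :=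
  (if par c = ε v then -(2⁻¹ : ℝ) else 2⁻¹) * dvf G ε M v

noncomputable def fFull (v : V) (c : A4) : ℝ := f0 ε M v c + corr G ε M v c

noncomputable def Ufull : ∀ F : Set V, (F → A4) → ℝ := mkU G (fFull G ε M) (ggsym ε M)

lemma corr_bf (v : V) (c : A4) : corr G ε M v (bf c) = corr G ε M v c := by
  rw [corr, corr, par_bf]

lemma siteU_add (f1 f2 : V → A4 → ℝ) (F : Set V) (p : F → A4) :
    siteU (fun v c => f1 v c + f2 v c) F p = siteU f1 F p + siteU f2 F p := by
  unfold siteU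
  by_cases h : ∃ v : V, F = {v}
  · rw [dif_pos h, dif_pos h, dif_pos h]
  · rw [dif_neg h, dif_neg h, dif_neg h]; ring

lemma Ufull_split (F : Set V) (p : F → A4) :
    Ufull G ε M F p = U0 G ε M F p + siteU (corr G ε M) F p := by
  unfold Ufull U0 mkU fFull
  rw [siteU_add]
  ring

variable {G}
variable (hε : ∀ u w, G.Adj u w → ε u ≠ ε w)
variable (hM : IsMarkovCocycle G (homSpace G C4) M)
variable (hlf : ∀ v : V, (G.neighborSet v).Finite)

include hε hM in
lemma fFull_grad (v : V) (c : A4) :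
    fFull G ε M v (bf c) - fFull G ε M v c = phi ε M v c := by
  have h := f0_grad ε M hε hM v c
  rw [fFull, fFull, corr_bf]
  linarith

include hlf in
lemma gibbs_split {x y : V → A4} (hd : {v | x v ≠ y v}.Finite) :
    gibbsSum (Ufull G ε M) x y
      = gibbsSum (U0 G ε M) x y + gibbsSum (siteU (corr G ε M)) x y := by
  have h1 : gibbsSum (Ufull G ε M) x y
      = gibbsSum (fun F p => U0 G ε M F p + siteU (corr G ε M) F p) x y := by
    rw [gibbsSum_eq, gibbsSum_eq]
    refine finsum_congr (fun F => ?_)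
    unfold tmf
    rw [Ufull_split, Ufull_split]
  rw [h1]
  exact gibbsSum_add (mkU_NN G _ _) (siteU_NN G _) hlf hd

include hε hM hlf in
lemma identityA_full : ∀ x ∈ homSpace G C4, ∀ v : V,
    M x (bflip x v) = gibbsSum (Ufull G ε M) x (bflip x v) :=
  identityA ε M hε hM hlf (fFull G ε M) (fFull_grad ε M hε hM)

include hε hM hlf in
/-- identity (B): component-flip increments agree with the gibbs sums -/
lemma identityB (v₀ : V) (hCf : (comp G v₀).Finite) :
    ∀ x ∈ homSpace G C4,
      M x (pflip (comp G v₀) x) = gibbsSum (Ufull G ε M) x (pflip (comp G v₀) x) := by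
  classical
  set C := comp G v₀ with hCdef
  have hC : CompClosed G C := comp_closed v₀
  have hA := identityA_full ε M hε hM hlf
  have hUNN : IsNNInteraction G (Ufull G ε M) := mkU_NN G _ _
  suffices hD : ∀ x ∈ homSpace G C4, Dfun M (Ufull G ε M) C x = 0 by
    intro x hx
    have := hD x hx
    unfold Dfun at this
    linarith
  -- the canonical configuration
  have hxcan : xcan ε ∈ homSpace G C4 := xcan_mem ε hε
  have hne0 : (C.ncard : ℝ) ≠ 0 := by
    have : C.Nonempty := ⟨v₀, mem_comp_self v₀⟩
    have hpos : 0 < C.ncard := this.ncard_pos hCf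
    exact_mod_cast hpos.ne'
  have Dcan : Dfun M (Ufull G ε M) C (xcan ε) = 0 := by
    have hdiff : {a | xcan ε a ≠ pflip C (xcan ε) a}.Finite :=
      Set.Finite.subset hCf (diff_pflip_subset C (xcan ε))
    have hsplit := gibbs_split ε M hlf hdiff
    have hsite := gibbsSum_pflip_site (corr G ε M) hCf (xcan ε)
    have hterm : ∀ w ∈ hCf.toFinset,
        corr G ε M w (pf (xcan ε w)) - corr G ε M w (xcan ε w)
          = dval G ε M C / C.ncard := by
      intro w hw
      rw [Set.Finite.mem_toFinset] at hw
      have hcw : comp G w = C := hCdef ▸ comp_eq_of_mem hw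
      have hdv : dvf G ε M w = dval G ε M C / C.ncard := by
        rw [dvf, hcw, if_pos hCf]
      rw [xcan]
      rw [corr, corr, if_neg (par_pf_emb (ε w)), if_pos (par_emb (ε w)), hdv]
      ring
    rw [Finset.sum_congr rfl hterm, Finset.sum_const] at hsite
    have hcard : (hCf.toFinset.card : ℝ) = (C.ncard : ℝ) := by
      rw [Set.ncard_eq_toFinset_card _ hCf]
    have hsiteval : gibbsSum (siteU (corr G ε M)) (xcan ε) (pflip C (xcan ε))
        = dval G ε M C := by
      rw [hsite, nsmul_eq_mul, hcard]
      field_simp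
    have hdval : dval G ε M C
        = M (xcan ε) (pflip C (xcan ε)) - gibbsSum (U0 G ε M) (xcan ε) (pflip C (xcan ε)) := rfl
    unfold Dfun
    rw [hsplit, hsiteval, hdval]
    ring
  -- bit-flattening induction in phase 0
  have Dzero0 : ∀ n : ℕ, ∀ x ∈ homSpace G C4,
      (∀ w, w ∉ C → x w = xcan ε w) → (∀ w ∈ C, par (x w) = ε w) →
      (hCf.toFinset.filter (fun w => x w ≠ xcan ε w)).card ≤ n →
      Dfun M (Ufull G ε M) C x = 0 := by
    intro n
    induction n with
    | zero =>
      intro x hx hoff hph hcard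
      have hxeq : x = xcan ε := by
        funext w
        by_cases hw : w ∈ C
        · by_contra hne
          have : w ∈ hCf.toFinset.filter (fun w => x w ≠ xcan ε w) :=
            Finset.mem_filter.2 ⟨Set.Finite.mem_toFinset _ |>.2 hw, hne⟩
          rw [Finset.card_eq_zero.1 (Nat.le_zero.1 hcard)] at this
          exact absurd this (Finset.notMem_empty w)
        · exact hoff w hw
      rw [hxeq]
      exact Dcan
    | succ n ih =>
      intro x hx hoff hph hcard
      rcases Finset.eq_empty_or_nonempty
        (hCf.toFinset.filter (fun w => x w ≠ xcan ε w)) with hem | ⟨w, hw⟩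
      · refine ih x hx hoff hph ?_
        rw [hem, Finset.card_empty]; exact Nat.zero_le n
      · have hwC : w ∈ C := Set.Finite.mem_toFinset _ |>.1 (Finset.mem_filter.1 hw).1
        have hwne : x w ≠ xcan ε w := (Finset.mem_filter.1 hw).2
        set x' := Function.update x w (emb (ε w)) with hx'def
        have hpb : par (emb (ε w)) = par (x w) := by
          rw [par_emb, hph w hwC]
        have hx'mem : x' ∈ homSpace G C4 := upd_mem hx hpb
        have hDeq : Dfun M (Ufull G ε M) C x' = Dfun M (Ufull G ε M) C x :=
          D_upd M hM hUNN hlf hA hC hCf hx w hpb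
        rw [← hDeq]
        have hx'w : x' w = xcan ε w := by
          rw [hx'def, Function.update_self, xcan]
        have hx'ne : ∀ a, a ≠ w → x' a = x a := fun a ha =>
          Function.update_of_ne ha _ _
        refine ih x' hx'mem (fun a ha => ?_) (fun a ha => ?_) ?_
        · rcases eq_or_ne a w with rfl | haw
          · exact absurd hwC ha
          · rw [hx'ne a haw]; exact hoff a ha
        · rcases eq_or_ne a w with rfl | haw
          · rw [hx'w, xcan, par_emb]
          · rw [hx'ne a haw]; exact hph a ha
        · have hfeq : hCf.toFinset.filter (fun a => x' a ≠ xcan ε a)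
              = (hCf.toFinset.filter (fun a => x a ≠ xcan ε a)).erase w := by
            ext a
            rw [Finset.mem_erase, Finset.mem_filter, Finset.mem_filter]
            constructor
            · rintro ⟨h1, h2⟩
              have haw : a ≠ w := by
                rintro rfl
                exact h2 hx'w
              rw [hx'ne a haw] at h2
              exact ⟨haw, h1, h2⟩
            · rintro ⟨haw, h1, h2⟩
              rw [← hx'ne a haw] at h2
              exact ⟨h1, h2⟩
          rw [hfeq]
          have := Finset.card_erase_of_mem hw
          omega
  -- main assembly
  intro x hx
  set x' := fun w => if w ∈ C then x w else xcan ε w with hx'def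
  have hx'mem : x' ∈ homSpace G C4 := by
    rw [mem_hs]
    intro a b hab
    by_cases ha : a ∈ C
    · have hb : b ∈ C := (hC a b hab).1 ha
      show par (if a ∈ C then x a else xcan ε a) ≠ par (if b ∈ C then x b else xcan ε b)
      rw [if_pos ha, if_pos hb]
      exact (mem_hs G).1 hx a b hab
    · have hb : b ∉ C := fun hbmem => ha ((hC a b hab).2 hbmem)
      show par (if a ∈ C then x a else xcan ε a) ≠ par (if b ∈ C then x b else xcan ε b)
      rw [if_neg ha, if_neg hb, xcan, xcan, par_emb, par_emb]
      exact hε a b hab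
  have hx'on : ∀ w ∈ C, x w = x' w := fun w hw => (if_pos hw).symm
  have hx'off : ∀ w, w ∉ C → x' w = xcan ε w := fun w hw => if_neg hw
  have hDloc : Dfun M (Ufull G ε M) C x = Dfun M (Ufull G ε M) C x' :=
    D_loc M hM hUNN hC hCf hx hx'mem hx'on
  rw [hDloc]
  by_cases hph : par (x' v₀) = ε v₀
  · refine Dzero0 _ x' hx'mem hx'off (fun w hw => ?_) le_rfl
    have := phase_const ε hε hx'mem (hCdef ▸ hw)
    rw [hph] at this
    exact fin2_sum_zero _ _ _ this
  · set x'' := pflip C x' with hx''def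
    have hx''mem : x'' ∈ homSpace G C4 := pflip_mem hC hx'mem
    have hDinv : Dfun M (Ufull G ε M) C x'' = - Dfun M (Ufull G ε M) C x' :=
      D_inv M hM hUNN hlf hC hCf hx'mem
    have hZ : Dfun M (Ufull G ε M) C x'' = 0 := by
      refine Dzero0 _ x'' hx''mem (fun w hw => ?_) (fun w hw => ?_) le_rfl
      · rw [hx''def, pflip_off hw]; exact hx'off w hw
      · rw [hx''def, pflip_on hw, par_pf_eq]
        have := phase_const ε hε hx'mem (hCdef ▸ hw)
        exact fin2_phase1 _ _ _ _ this hph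
    rw [hZ] at hDinv
    linarith

end FullDef
section Main
variable {V : Type*} {G : SimpleGraph V}
variable (ε : V → Fin 2) (M : (V → A4) → (V → A4) → ℝ)
variable (hε : ∀ u w, G.Adj u w → ε u ≠ ε w)
variable (hM : IsMarkovCocycle G (homSpace G C4) M)
variable (hlf : ∀ v : V, (G.neighborSet v).Finite)
include hε hM hlf

omit hε hM hlf in
lemma fin2_step : ∀ a b : Fin 2, a ≠ b → a + 1 = b := by decide

/-- the main identity: every Markov cocycle agrees with the gibbs sums of `Ufull` -/
lemma main_eq : ∀ x y : V → A4, (x, y) ∈ Delta (homSpace G C4) →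
    M x y = gibbsSum (Ufull G ε M) x y := by
  classical
  have hUNN : IsNNInteraction G (Ufull G ε M) := mkU_NN G _ _
  suffices h : ∀ n : ℕ, ∀ x y : V → A4, (x, y) ∈ Delta (homSpace G C4) →
      ({w | par (x w) ≠ par (y w)}.ncard + {w | x w ≠ y w}.ncard ≤ n) →
      M x y = gibbsSum (Ufull G ε M) x y by
    intro x y hxy; exact h _ x y hxy le_rfl
  intro n
  induction n with
  | zero =>
    intro x y hxy hcard
    have hmdf : {w | x w ≠ y w}.Finite := hxy.2.2
    have hmd : {w | x w ≠ y w} = ∅ := by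
      refine (Set.ncard_eq_zero hmdf).1 ?_
      omega
    have hxeq : x = y := by
      funext w
      by_contra hne
      have hmem : w ∈ {w | x w ≠ y w} := hne
      rw [hmd] at hmem; exact hmem
    rw [hxeq, M_self M hM hxy.2.1, gibbsSum_self]
  | succ n ih =>
    intro x y hxy hcard
    obtain ⟨hx', hy', hmdf'⟩ := hxy
    have hx : x ∈ homSpace G C4 := hx'
    have hy : y ∈ homSpace G C4 := hy'
    have hmdf : {w | x w ≠ y w}.Finite := hmdf'
    have hpdsub : {w | par (x w) ≠ par (y w)} ⊆ {w | x w ≠ y w} :=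
      fun w hw he => hw (congrArg par he)
    have hpdf : {w | par (x w) ≠ par (y w)}.Finite := hmdf.subset hpdsub
    rcases Set.eq_empty_or_nonempty {w | par (x w) ≠ par (y w)} with hpd | ⟨v, hv⟩
    · rcases Set.eq_empty_or_nonempty {w | x w ≠ y w} with hmd | ⟨v, hv⟩
      · have hxeq : x = y := by
          funext w
          by_contra hne
          have hmem : w ∈ {w | x w ≠ y w} := hne
          rw [hmd] at hmem; exact hmem
        rw [hxeq, M_self M hM hy, gibbsSum_self]
      · have hvne : x v ≠ y v := hv
        have hpe : par (x v) = par (y v) := by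
          by_contra h
          have hmem : v ∈ {w | par (x w) ≠ par (y w)} := h
          rw [hpd] at hmem; exact hmem
        have hbf : y v = bf (x v) := eq_bf_of_par_eq _ _ hpe hvne
        set z := bflip x v with hz
        have hzmem : z ∈ homSpace G C4 := bflip_mem hx v
        have hzv : z v = y v := by rw [hz, bflip_at, hbf]
        have hzne : ∀ w, w ≠ v → z w = x w := fun w hw => bflip_ne x hw
        have hmdzy : {w | z w ≠ y w} ⊆ {w | x w ≠ y w} \ {v} := by
          intro w hw
          have hwv : w ≠ v := by
            rintro rfl
            exact hw hzv
          rw [Set.mem_setOf_eq, hzne w hwv] at hw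
          exact ⟨hw, hwv⟩
        have hdz : (x, z) ∈ Delta (homSpace G C4) := delta_bflip hx v
        have hdzy : (z, y) ∈ Delta (homSpace G C4) :=
          ⟨hzmem, hy, hmdf.subset (hmdzy.trans Set.diff_subset)⟩
        have hc := M_chain M hM hdz hdzy
        have hgc : gibbsSum (Ufull G ε M) x y
            = gibbsSum (Ufull G ε M) x z + gibbsSum (Ufull G ε M) z y :=
          gibbsSum_chain hUNN hlf hdz.2.2 hdzy.2.2
        have hA := identityA_full ε M hε hM hlf x hx v
        have hIH : M z y = gibbsSum (Ufull G ε M) z y := by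
          refine ih z y hdzy ?_
          have hpzy : {w | par (z w) ≠ par (y w)} = ∅ := by
            rw [Set.eq_empty_iff_forall_notMem]
            intro w hw
            rw [Set.mem_setOf_eq] at hw
            rcases eq_or_ne w v with rfl | hwv
            · rw [hzv] at hw; exact hw rfl
            · rw [hzne w hwv] at hw
              have : w ∈ {w | par (x w) ≠ par (y w)} := hw
              rw [hpd] at this; exact this
          have h1 : {w | z w ≠ y w}.ncard < {w | x w ≠ y w}.ncard := by
            refine lt_of_le_of_lt (Set.ncard_le_ncard hmdzy hmdf.diff) ?_
            refine Set.ncard_lt_ncard ?_ hmdf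
            exact Set.sdiff_singleton_ssubset.2 hv
          rw [hpzy]
          have hz2 : {w | par (x w) ≠ par (y w)}.ncard = 0 := by
            rw [hpd]; exact Set.ncard_empty V
          simp only [Set.ncard_empty]
          omega
        rw [hc, hgc, hA, hIH]
    · have hpdC : CompClosed G {w | par (x w) ≠ par (y w)} := pd_closed hx hy
      have hCsub : comp G v ⊆ {w | par (x w) ≠ par (y w)} := closed_subset hpdC hv
      have hCf : (comp G v).Finite := hpdf.subset hCsub
      set z := pflip (comp G v) x with hz
      have hzmem : z ∈ homSpace G C4 := pflip_mem (comp_closed v) hx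
      have hdz : (x, z) ∈ Delta (homSpace G C4) := delta_pflip hx (comp_closed v) hCf
      have hmdzy : {w | z w ≠ y w} ⊆ {w | x w ≠ y w} := by
        intro w hw
        rw [Set.mem_setOf_eq] at hw
        by_cases hwC : w ∈ comp G v
        · exact hpdsub (hCsub hwC)
        · rw [hz, pflip_off hwC] at hw; exact hw
      have hdzy : (z, y) ∈ Delta (homSpace G C4) := ⟨hzmem, hy, hmdf.subset hmdzy⟩
      have hc := M_chain M hM hdz hdzy
      have hgc : gibbsSum (Ufull G ε M) x y
          = gibbsSum (Ufull G ε M) x z + gibbsSum (Ufull G ε M) z y :=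
        gibbsSum_chain hUNN hlf hdz.2.2 hdzy.2.2
      have hB := identityB ε M hε hM hlf v hCf x hx
      have hIH : M z y = gibbsSum (Ufull G ε M) z y := by
        refine ih z y hdzy ?_
        have hpzy : {w | par (z w) ≠ par (y w)}
            = {w | par (x w) ≠ par (y w)} \ comp G v := by
          ext w
          simp only [Set.mem_setOf_eq, Set.mem_diff]
          by_cases hwC : w ∈ comp G v
          · have hwpd : par (x w) ≠ par (y w) := hCsub hwC
            have hstep : par (x w) + 1 = par (y w) := fin2_step _ _ hwpd
            rw [hz, pflip_on hwC, par_pf_eq, hstep]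
            simp only [ne_eq, not_true_eq_false, false_iff, not_and]
            intro _; exact fun hc => hc hwC
          · rw [hz, pflip_off hwC]
            simp [hwC]
        have h1 : {w | par (z w) ≠ par (y w)}.ncard
            < {w | par (x w) ≠ par (y w)}.ncard := by
          rw [hpzy]
          refine Set.ncard_lt_ncard ?_ hpdf
          rw [Set.ssubset_iff_of_subset Set.diff_subset]
          exact ⟨v, hv, fun hmem => hmem.2 (mem_comp_self v)⟩
        have h2 : {w | z w ≠ y w}.ncard ≤ {w | x w ≠ y w}.ncard :=
          Set.ncard_le_ncard hmdzy hmdf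
        omega
      rw [hc, hgc, hB, hIH]

end Main
/-! ### equivariance -/

theorem Equiv.Perm.apply_inv_self {α : Type*} (f : Equiv.Perm α) (x : α) : f (f⁻¹ x) = x :=
  Equiv.apply_symm_apply f x

theorem Equiv.Perm.inv_apply_self {α : Type*} (f : Equiv.Perm α) (x : α) : f⁻¹ (f x) = x :=
  Equiv.symm_apply_apply f x


section Equivariance
variable {V : Type*} {G : SimpleGraph V}
variable {S : Subgroup (Equiv.Perm V)} (hS : PreservesAdj G S)
variable {g : Equiv.Perm V} (hg : g ∈ S)
include hS hg

lemma adj_inv_img {u v : V} (h : G.Adj u v) : G.Adj (g⁻¹ u) (g⁻¹ v) := by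
  refine (hS g hg _ _).1 ?_
  have e1 : g (g⁻¹ u) = u := Equiv.Perm.apply_inv_self g u
  have e2 : g (g⁻¹ v) = v := Equiv.Perm.apply_inv_self g v
  rw [e1, e2]
  exact h

lemma adj_img {u v : V} (h : G.Adj u v) : G.Adj (g u) (g v) := (hS g hg u v).2 h

omit hS hg

lemma confAct_apply {A : Type*} (x : V → A) (v : V) : confAct g x (g v) = x v := by
  rw [confAct, Equiv.Perm.inv_apply_self]

include hS hg in
lemma confAct_mem {x : V → A4} (hx : x ∈ homSpace G C4) :
    confAct g x ∈ homSpace G C4 := by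
  rw [mem_hs] at hx ⊢
  intro v w hvw
  exact hx _ _ (adj_inv_img hS hg hvw)

lemma mem_img_iff (C : Set V) (w : V) : w ∈ ⇑g '' C ↔ g⁻¹ w ∈ C := by
  constructor
  · rintro ⟨a, ha, rfl⟩
    rw [Equiv.Perm.inv_apply_self]; exact ha
  · intro h
    exact ⟨g⁻¹ w, h, Equiv.Perm.apply_inv_self g w⟩

lemma confAct_diff (x y : V → A4) :
    {v | confAct g x v ≠ confAct g y v} = ⇑g '' {v | x v ≠ y v} := by
  ext w
  rw [mem_img_iff]
  exact Iff.rfl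

include hS hg in
lemma delta_img {x y : V → A4} (h : (x, y) ∈ Delta (homSpace G C4)) :
    (confAct g x, confAct g y) ∈ Delta (homSpace G C4) := by
  refine ⟨confAct_mem hS hg h.1, confAct_mem hS hg h.2.1, ?_⟩
  rw [confAct_diff]
  exact h.2.2.image _

lemma confAct_update (x : V → A4) (v : V) (c : A4) :
    confAct g (Function.update x v c) = Function.update (confAct g x) (g v) c := by
  funext w
  rcases eq_or_ne w (g v) with rfl | hw
  · rw [Function.update_self, confAct, Equiv.Perm.inv_apply_self, Function.update_self]
  · have hw' : g⁻¹ w ≠ v := by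
      intro hh
      exact hw (by rw [← hh, Equiv.Perm.apply_inv_self])
    rw [Function.update_of_ne hw, confAct, confAct, Function.update_of_ne hw']

lemma confAct_bflip (x : V → A4) (v : V) :
    confAct g (bflip x v) = bflip (confAct g x) (g v) := by
  rw [bflip, bflip, confAct_update, confAct_apply]

lemma confAct_pflip (C : Set V) (x : V → A4) :
    confAct g (pflip C x) = pflip (⇑g '' C) (confAct g x) := by
  funext w
  by_cases hw : w ∈ ⇑g '' C
  · rw [pflip_on hw, confAct, confAct, pflip_on ((mem_img_iff C w).1 hw)]
  · rw [pflip_off hw, confAct, confAct, pflip_off (fun hc => hw ((mem_img_iff C w).2 hc))]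

include hS hg in
lemma comp_img (v : V) : comp G (g v) = ⇑g '' comp G v := by
  have hmap : ∀ (h : Equiv.Perm V), h ∈ S → ∀ a b : V, G.Reachable a b →
      G.Reachable (h a) (h b) := by
    intro h hh a b hr
    exact hr.map (⟨h, fun hadj => adj_img hS hh hadj⟩ : G →g G)
  ext w
  rw [mem_img_iff]
  constructor
  · intro hr
    have := hmap g⁻¹ (S.inv_mem hg) (g v) w hr
    rw [Equiv.Perm.inv_apply_self] at this
    exact this
  · intro hr
    have := hmap g hg v (g⁻¹ w) hr
    rw [Equiv.Perm.apply_inv_self] at this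
    exact this

end Equivariance
section Equivariance2
variable {V : Type*} {G : SimpleGraph V}
variable {S : Subgroup (Equiv.Perm V)} (hS : PreservesAdj G S)
variable {g : Equiv.Perm V} (hg : g ∈ S)
variable (ε : V → Fin 2) (M : (V → A4) → (V → A4) → ℝ)

lemma two_col_const (ε₁ ε₂ : V → Fin 2) (h1 : ∀ u w, G.Adj u w → ε₁ u ≠ ε₁ w)
    (h2 : ∀ u w, G.Adj u w → ε₂ u ≠ ε₂ w) {v u : V} (hu : u ∈ comp G v) :
    ε₁ u + ε₂ u = ε₁ v + ε₂ v := by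
  obtain ⟨p⟩ := hu
  induction p with
  | nil => rfl
  | @cons a b u h q ih =>
    have e1 : ε₁ b = ε₁ a + 1 := fin2_of_ne _ _ (h1 b a h.symm)
    have e2 : ε₂ b = ε₂ a + 1 := fin2_of_ne _ _ (h2 b a h.symm)
    rw [ih, e1, e2, fin2_add_flip]

variable (hε : ∀ u w, G.Adj u w → ε u ≠ ε w)
variable (hM : IsMarkovCocycle G (homSpace G C4) M)
variable (hInv : ∀ x y : V → A4, M (confAct g x) (confAct g y) = M x y)
include hS hg hε hM hInv

lemma phi_equiv (v : V) (c : A4) : phi ε M (g v) c = phi ε M v c := by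
  set y := confAct g (base ε v c) with hy
  have hymem : y ∈ homSpace G C4 := confAct_mem hS hg (base_mem ε hε v c)
  have hyv : y (g v) = c := by rw [hy, confAct_apply, base_at]
  have h1 : M y (bflip y (g v)) = phi ε M (g v) c := by
    rw [← hyv]
    refine phi_wd ε M hε hM hymem (fun u hu => ?_)
    have hadj' : G.Adj v (g⁻¹ u) := by
      have := adj_inv_img hS hg hu
      rwa [Equiv.Perm.inv_apply_self] at this
    have hval : y u = emb (par c + 1) := by
      rw [hy, confAct, base_nbr ε hε hadj']
    rw [hval, emb_par_emb]
  rw [← h1, hy, ← confAct_bflip]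
  exact hInv _ _

omit hS hg hε hInv
include hM

lemma kv_invalid {v u : V} (hadj : G.Adj v u) {c d : A4} (hpar : par d = par c) :
    kv ε M v u c d = 0 := by
  set t := Function.update (base ε v c) u d with ht
  have htv : t v = c := by rw [ht, Function.update_of_ne hadj.ne, base_at]
  have htu : t u = d := Function.update_self _ _ _
  have htnot : t ∉ homSpace G C4 := by
    intro hmem
    have := (mem_hs G).1 hmem v u hadj
    rw [htv, htu] at this
    exact this hpar.symm
  have hznot : zeroed t u ∉ homSpace G C4 := by
    intro hmem
    refine htnot (parity_replace hmem (fun w => ?_))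
    rcases eq_or_ne w u with rfl | hw
    · rw [zeroed, Function.update_self, par_emb]
    · rw [zeroed, Function.update_of_ne hw]
  have h1 : M t (bflip t v) = 0 := hM.1 _ _ (fun hc => htnot hc.1)
  have h2 : M (zeroed t u) (bflip (zeroed t u) v) = 0 := hM.1 _ _ (fun hc => hznot hc.1)
  rw [kv, ← ht, h1, h2, sub_zero]

include hS hg hε hInv

lemma kv_equiv {v u : V} (hadj : G.Adj v u) (c d : A4) :
    kv ε M (g v) (g u) c d = kv ε M v u c d := by
  by_cases hpar : par d = par c
  · rw [kv_invalid ε M hM (adj_img hS hg hadj) hpar, kv_invalid ε M hM hadj hpar]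
  · have hpar' : par d = par c + 1 := fin2_of_ne _ _ hpar
    set t := Function.update (base ε v c) u d with ht
    have htv : t v = c := by rw [ht, Function.update_of_ne hadj.ne, base_at]
    have htu : t u = d := Function.update_self _ _ _
    have ht_mem : t ∈ homSpace G C4 := by
      refine upd_mem (base_mem ε hε v c) ?_
      rw [base_nbr ε hε hadj, par_emb]; exact hpar'
    set x := confAct g t with hx
    have hxmem : x ∈ homSpace G C4 := confAct_mem hS hg ht_mem
    have hxv : x (g v) = c := by rw [hx, confAct_apply, htv]
    have hxu : x (g u) = d := by rw [hx, confAct_apply, htu]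
    have hK1 := K1 ε M hε hM hxmem (adj_img hS hg hadj)
    rw [hxv, hxu] at hK1
    have hK2 := K1 ε M hε hM ht_mem hadj
    rw [htv, htu] at hK2
    have e1 : M x (bflip x (g v)) = M t (bflip t v) := by
      rw [hx, ← confAct_bflip]
      exact hInv _ _
    have e2 : zeroed x (g u) = confAct g (zeroed t u) := by
      rw [zeroed, zeroed, hxu, htu, confAct_update, hx]
    have e3 : M (zeroed x (g u)) (bflip (zeroed x (g u)) (g v))
        = M (zeroed t u) (bflip (zeroed t u) v) := by
      rw [e2, ← confAct_bflip]
      exact hInv _ _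
    rw [← hK1, ← hK2, e1, e3]

lemma rawg_equiv {v u : V} (hadj : G.Adj v u) (c d : A4) :
    rawg ε M (g v) (g u) c d = rawg ε M v u c d := by
  rw [rawg, rawg]
  by_cases h : c ≠ emb (par c)
  · rw [if_pos h, if_pos h, kv_equiv hS hg ε M hε hM hInv hadj]
  · rw [if_neg h, if_neg h]

lemma ggsym_equiv {v u : V} (hadj : G.Adj v u) (c d : A4) :
    ggsym ε M (g v) (g u) c d = ggsym ε M v u c d := by
  rw [ggsym, ggsym, rawg_equiv hS hg ε M hε hM hInv hadj,
    rawg_equiv hS hg ε M hε hM hInv hadj.symm]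

lemma f0_equiv (v : V) (c : A4) : f0 ε M (g v) c = f0 ε M v c := by
  rw [f0, f0]
  by_cases h : c ≠ emb (par c)
  · rw [if_pos h, if_pos h, phi_equiv hS hg ε M hε hM hInv]
  · rw [if_neg h, if_neg h]

end Equivariance2

section InteractionInv
variable {V : Type*} {G : SimpleGraph V}
variable {S : Subgroup (Equiv.Perm V)}
variable {g : Equiv.Perm V} (hg : g ∈ S)

lemma img_singleton_iff (F : Set V) :
    (∃ w : V, ⇑g '' F = {w}) ↔ (∃ v : V, F = {v}) := by
  constructor
  · rintro ⟨w, hw⟩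
    refine ⟨g⁻¹ w, ?_⟩
    ext a
    constructor
    · intro ha
      have : g a ∈ ⇑g '' F := ⟨a, ha, rfl⟩
      rw [hw] at this
      rcases Set.mem_singleton_iff.1 this with h
      rw [Set.mem_singleton_iff, ← h, Equiv.Perm.inv_apply_self]
    · intro ha
      rcases Set.mem_singleton_iff.1 ha with rfl
      have : g (g⁻¹ w) ∈ ({w} : Set V) := by
        rw [Equiv.Perm.apply_inv_self]; exact rfl
      rw [← hw] at this
      obtain ⟨b, hb, hbe⟩ := this
      have hb2 : b = g⁻¹ w := by
        have h3 := congrArg (⇑g⁻¹) hbe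
        simpa using h3
      rwa [← hb2]
  · rintro ⟨v, rfl⟩
    exact ⟨g v, Set.image_singleton⟩

lemma siteU_inv {f : V → A4 → ℝ} (hf : ∀ v c, f (g v) c = f v c)
    (F : Set V) (x : V → A4) :
    siteU f (⇑g '' F) ((⇑g '' F).restrict (confAct g x)) = siteU f F (F.restrict x) := by
  by_cases h : ∃ v : V, F = {v}
  · obtain ⟨v, rfl⟩ := h
    rw [Set.image_singleton, siteU_eval, siteU_eval, confAct_apply, hf]
  · rw [siteU_not h, siteU_not (fun hc => h ((img_singleton_iff F).1 hc))]

lemma img_pair (u v : V) : ⇑g '' ({u, v} : Set V) = {g u, g v} := by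
  rw [Set.image_insert_eq, Set.image_singleton]

include hg in
lemma img_pair_iff (hS : PreservesAdj G S) (F : Set V) :
    (∃ e : V × V, G.Adj e.1 e.2 ∧ ⇑g '' F = {e.1, e.2})
      ↔ (∃ e : V × V, G.Adj e.1 e.2 ∧ F = {e.1, e.2}) := by
  constructor
  · rintro ⟨e, hadj, he⟩
    refine ⟨(g⁻¹ e.1, g⁻¹ e.2), adj_inv_img hS hg hadj, ?_⟩
    have := congrArg (Set.image ⇑g⁻¹) he
    rw [← Set.image_comp] at this
    have hid : (⇑g⁻¹ ∘ ⇑g) = id := by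
      funext a; exact Equiv.Perm.inv_apply_self g a
    rw [hid, Set.image_id] at this
    rw [this, img_pair]
  · rintro ⟨e, hadj, rfl⟩
    exact ⟨(g e.1, g e.2), adj_img hS hg hadj, img_pair e.1 e.2⟩

include hg in
lemma edgeU_inv (hS : PreservesAdj G S) {gg : V → V → A4 → A4 → ℝ}
    (hsym : ∀ a b c d, gg a b c d = gg b a d c)
    (hgg : ∀ u v, G.Adj u v → ∀ c d, gg (g u) (g v) c d = gg u v c d)
    (F : Set V) (x : V → A4) :
    edgeU G gg (⇑g '' F) ((⇑g '' F).restrict (confAct g x))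
      = edgeU G gg F (F.restrict x) := by
  by_cases h : ∃ e : V × V, G.Adj e.1 e.2 ∧ F = {e.1, e.2}
  · obtain ⟨e, hadj, rfl⟩ := h
    rw [img_pair, edgeU_eval G hsym (adj_img hS hg hadj),
      edgeU_eval G hsym hadj, confAct_apply, confAct_apply, hgg e.1 e.2 hadj]
  · rw [edgeU_not G h, edgeU_not G (fun hc => h ((img_pair_iff hg hS F).1 hc))]

lemma gibbsSum_reindex {U : ∀ F : Set V, (F → A4) → ℝ}
    (hUinv : ∀ F : Set V, ∀ x : V → A4,
      U (⇑g '' F) ((⇑g '' F).restrict (confAct g x)) = U F (F.restrict x))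
    (x y : V → A4) :
    gibbsSum U (confAct g x) (confAct g y) = gibbsSum U x y := by
  rw [gibbsSum_eq, gibbsSum_eq]
  refine (finsum_eq_of_bijective (fun F : Set V => ⇑g '' F) ?_ ?_).symm
  · have : Function.Bijective (fun F : Set V => ⇑g '' F) :=
      (Equiv.Set.congr (g : Equiv.Perm V)).bijective
    exact this
  · intro F
    unfold tmf
    rw [hUinv F x, hUinv F y]

end InteractionInv
section Equivariance3
variable {V : Type*} {G : SimpleGraph V}
variable {S : Subgroup (Equiv.Perm V)} (hS : PreservesAdj G S)
variable {g : Equiv.Perm V} (hg : g ∈ S)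
variable (ε : V → Fin 2) (M : (V → A4) → (V → A4) → ℝ)
variable (hε : ∀ u w, G.Adj u w → ε u ≠ ε w)
variable (hM : IsMarkovCocycle G (homSpace G C4) M)
variable (hInv : ∀ x y : V → A4, M (confAct g x) (confAct g y) = M x y)
include hS hg hε hM hInv

lemma U0_inv_g : ∀ (F : Set V) (x : V → A4),
    U0 G ε M (⇑g '' F) ((⇑g '' F).restrict (confAct g x)) = U0 G ε M F (F.restrict x) := by
  intro F x
  unfold U0 mkU
  rw [siteU_inv (f0_equiv hS hg ε M hε hM hInv),
    edgeU_inv hg hS (ggsym_symm ε M)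
      (fun u v hadj c d => ggsym_equiv hS hg ε M hε hM hInv hadj c d)]

variable (hlf : ∀ v : V, (G.neighborSet v).Finite)
include hlf

lemma dval_equiv (v₀ : V) (hCf : (comp G v₀).Finite) :
    dval G ε M (comp G (g v₀))
      = (if ε (g v₀) = ε v₀ then dval G ε M (comp G v₀)
          else - dval G ε M (comp G v₀)) := by
  set C := comp G v₀ with hCdef
  set C' := comp G (g v₀) with hC'def
  have himg : C' = ⇑g '' C := comp_img hS hg v₀
  have hC'f : C'.Finite := by rw [himg]; exact hCf.image _
  have hC' : CompClosed G C' := comp_closed _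
  have hU0NN : IsNNInteraction G (U0 G ε M) := mkU_NN G _ _
  have hxcan : xcan ε ∈ homSpace G C4 := xcan_mem ε hε
  have hgxcan : confAct g (xcan ε) ∈ homSpace G C4 := confAct_mem hS hg hxcan
  have hpfl : pflip C' (confAct g (xcan ε)) = confAct g (pflip C (xcan ε)) := by
    rw [himg]; exact (confAct_pflip C (xcan ε)).symm
  have StepA : Dfun M (U0 G ε M) C' (confAct g (xcan ε)) = dval G ε M C := by
    unfold Dfun dval
    rw [hpfl, hInv (xcan ε) (pflip C (xcan ε)),
      gibbsSum_reindex (U0_inv_g hS hg ε M hε hM hInv) (xcan ε) (pflip C (xcan ε))]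
    rfl
  have hcol : ∀ u w : V, G.Adj u w → ε (g⁻¹ u) ≠ ε (g⁻¹ w) :=
    fun u w h => hε _ _ (adj_inv_img hS hg h)
  have hconst : ∀ w ∈ C', ε (g⁻¹ w) + ε w = ε v₀ + ε (g v₀) := by
    intro w hw
    have h5 := two_col_const (fun a => ε (g⁻¹ a)) ε hcol hε hw
    simpa using h5
  by_cases hph : ε (g v₀) = ε v₀
  · rw [if_pos hph]
    have hagree : ∀ w ∈ C', confAct g (xcan ε) w = xcan ε w := by
      intro w hw
      have h1 := hconst w hw
      rw [hph] at h1
      have h2 : ε (g⁻¹ w) = ε w := fin2_sum_zero _ _ _ h1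
      show emb (ε (g⁻¹ w)) = emb (ε w)
      rw [h2]
    have hD := D_loc M hM hU0NN hC' hC'f hgxcan hxcan hagree
    calc dval G ε M C' = Dfun M (U0 G ε M) C' (xcan ε) := rfl
      _ = Dfun M (U0 G ε M) C' (confAct g (xcan ε)) := hD.symm
      _ = dval G ε M C := StepA
  · rw [if_neg hph]
    have hagree : ∀ w ∈ C', xcan ε w = pflip C' (confAct g (xcan ε)) w := by
      intro w hw
      have h1 := hconst w hw
      have h2 : ε (g⁻¹ w) + 1 = ε w :=
        fin2_phase1 _ _ _ _ h1 (fun hc => hph hc.symm)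
      rw [pflip_on hw]
      show emb (ε w) = pf (emb (ε (g⁻¹ w)))
      rw [pf_emb, h2]
    have hd1 : Dfun M (U0 G ε M) C' (xcan ε)
        = Dfun M (U0 G ε M) C' (pflip C' (confAct g (xcan ε))) :=
      D_loc M hM hU0NN hC' hC'f hxcan (pflip_mem hC' hgxcan) hagree
    have hd2 : Dfun M (U0 G ε M) C' (pflip C' (confAct g (xcan ε)))
        = - Dfun M (U0 G ε M) C' (confAct g (xcan ε)) :=
      D_inv M hM hU0NN hlf hC' hC'f hgxcan
    have : dval G ε M C' = Dfun M (U0 G ε M) C' (xcan ε) := rfl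
    rw [this, hd1, hd2, StepA]

lemma dvf_equiv (v : V) :
    dvf G ε M (g v) = (if ε (g v) = ε v then dvf G ε M v else - dvf G ε M v) := by
  have himg : comp G (g v) = ⇑g '' comp G v := comp_img hS hg v
  by_cases hfin : (comp G v).Finite
  · have hfin' : (comp G (g v)).Finite := by rw [himg]; exact hfin.image _
    have hncard : (comp G (g v)).ncard = (comp G v).ncard := by
      rw [himg]
      exact Set.ncard_image_of_injective _ g.injective
    rw [dvf, dvf, if_pos hfin', if_pos hfin,
      dval_equiv hS hg ε M hε hM hInv hlf v hfin, hncard]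
    by_cases hph : ε (g v) = ε v
    · rw [if_pos hph, if_pos hph]
    · rw [if_neg hph, if_neg hph]
      ring
  · have hfin' : ¬(comp G (g v)).Finite := by
      intro hc
      refine hfin ?_
      have : comp G v = ⇑g⁻¹ '' comp G (g v) := by
        rw [himg, ← Set.image_comp]
        have hid : (⇑g⁻¹ ∘ ⇑g) = id := by
          funext a; exact Equiv.Perm.inv_apply_self g a
        rw [hid, Set.image_id]
      rw [this]
      exact hc.image _
    rw [dvf, dvf, if_neg hfin', if_neg hfin]
    by_cases hph : ε (g v) = ε v
    · rw [if_pos hph]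
    · rw [if_neg hph]; ring

lemma corr_equiv (v : V) (c : A4) : corr G ε M (g v) c = corr G ε M v c := by
  rw [corr, corr, dvf_equiv hS hg ε M hε hM hInv hlf v]
  by_cases hph : ε (g v) = ε v
  · rw [if_pos hph, hph]
  · rw [if_neg hph]
    have hstep : ε (g v) = ε v + 1 := fin2_of_ne _ _ hph
    rw [hstep]
    by_cases hc : par c = ε v
    · rw [if_pos hc, if_neg (by rw [hc]; exact fin2_succ_ne (ε v) ∘ Eq.symm)]
      ring
    · have hc1 : par c = ε v + 1 := fin2_of_ne _ _ hc
      rw [if_neg hc, if_pos hc1]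
      ring

lemma fFull_equiv (v : V) (c : A4) : fFull G ε M (g v) c = fFull G ε M v c := by
  rw [fFull, fFull, f0_equiv hS hg ε M hε hM hInv,
    corr_equiv hS hg ε M hε hM hInv hlf]

lemma Ufull_inv_g : ∀ (F : Set V) (x : V → A4),
    Ufull G ε M (⇑g '' F) ((⇑g '' F).restrict (confAct g x))
      = Ufull G ε M F (F.restrict x) := by
  intro F x
  unfold Ufull mkU
  rw [siteU_inv (fFull_equiv hS hg ε M hε hM hInv hlf),
    edgeU_inv hg hS (ggsym_symm ε M)
      (fun u v hadj c d => ggsym_equiv hS hg ε M hε hM hInv hadj c d)]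

end Equivariance3
/-! ### final assembly -/


section FinalProof
variable {V : Type*} {G : SimpleGraph V}

lemma confAct_inv_cancel (g : Equiv.Perm V) (x : V → A4) :
    confAct g⁻¹ (confAct g x) = x := by
  funext v
  rw [confAct, confAct, inv_inv, Equiv.Perm.inv_apply_self]

lemma gibbs_to_markov (hlf : ∀ v : V, (G.neighborSet v).Finite)
    {M : (V → A4) → (V → A4) → ℝ}
    (h0 : ∀ x y : V → A4, (x, y) ∉ Delta (homSpace G C4) → M x y = 0)
    {U : ∀ F : Set V, (F → A4) → ℝ} (hU : IsNNInteraction G U)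
    (heq : ∀ x y : V → A4, (x, y) ∈ Delta (homSpace G C4) → M x y = gibbsSum U x y) :
    IsMarkovCocycle G (homSpace G C4) M := by
  refine ⟨h0, ?_, ?_⟩
  · intro x y z h1 h2
    have h3 : (x, z) ∈ Delta (homSpace G C4) := by
      refine ⟨h1.1, h2.2.1, Set.Finite.subset (h1.2.2.union h2.2.2) ?_⟩
      intro v hv
      by_cases h : x v = y v
      · exact Or.inr (fun hc => hv (h.trans hc))
      · exact Or.inl h
    rw [heq _ _ h1, heq _ _ h2, heq _ _ h3]
    exact gibbsSum_chain hU hlf h1.2.2 h2.2.2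
  · intro x y z w h1 h2 hsim
    rw [heq _ _ h1, heq _ _ h2]
    exact gibbsSum_sim hU hsim

lemma eps_of_bip {P₁ P₂ : Set V} (hbip : IsBipartition G P₁ P₂) :
    ∃ ε : V → Fin 2, ∀ u w, G.Adj u w → ε u ≠ ε w := by
  obtain ⟨hcov, hdisj, hedge⟩ := hbip
  refine ⟨fun v => if v ∈ P₁ then 0 else 1, fun u w hadj => ?_⟩
  show (if u ∈ P₁ then (0 : Fin 2) else 1) ≠ (if w ∈ P₁ then 0 else 1)
  rcases hedge u w hadj with ⟨hu, hw⟩ | ⟨hu, hw⟩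
  · rw [if_pos hu, if_neg (fun hc => Set.disjoint_left.1 hdisj hc hw)]
    decide
  · rw [if_neg (fun hc => Set.disjoint_left.1 hdisj hc hu), if_pos hw]
    decide

theorem statement19' (hlf : ∀ v : V, (G.neighborSet v).Finite) (hbip : Bipartite G)
    (S : Subgroup (Equiv.Perm V)) (hS : PreservesAdj G S) :
    IsHammersleyClifford G (homSpace G C4) ∧
      IsGHammersleyClifford G S (homSpace G C4) := by
  obtain ⟨P₁, P₂, hbip'⟩ := hbip
  obtain ⟨ε, hε⟩ := eps_of_bip hbip'
  constructor
  · ext M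
    constructor
    · intro hMk
      exact ⟨hMk.1, Ufull G ε M, mkU_NN G _ _, main_eq ε M hε hMk hlf⟩
    · rintro ⟨h0, U, hU, heq⟩
      exact gibbs_to_markov hlf h0 hU heq
  · ext M
    constructor
    · rintro ⟨hMk, hInvC⟩
      refine ⟨hMk.1, Ufull G ε M, mkU_NN G _ _, ?_, main_eq ε M hε hMk hlf⟩
      intro g hg F x
      exact Ufull_inv_g hS hg ε M hε hMk (fun a b => hInvC g hg a b) hlf F x
    · rintro ⟨h0, U, hU, hUinv, heq⟩
      refine ⟨gibbs_to_markov hlf h0 hU heq, ?_⟩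
      intro g hg x y
      by_cases hxy : (x, y) ∈ Delta (homSpace G C4)
      · have hgxy : (confAct g x, confAct g y) ∈ Delta (homSpace G C4) :=
          delta_img hS hg hxy
        rw [heq _ _ hgxy, heq _ _ hxy]
        exact gibbsSum_reindex (fun F z => hUinv g hg F z) x y
      · have hgxy : (confAct g x, confAct g y) ∉ Delta (homSpace G C4) := by
          intro hc
          have := delta_img hS (S.inv_mem hg) hc
          rw [confAct_inv_cancel, confAct_inv_cancel] at this
          exact hxy this
        rw [h0 _ _ hgxy, h0 _ _ hxy]

end FinalProof

/-- For every bipartite countable locally finite graph `G` and every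
subgroup of automorphisms, `Hom(G, C₄)` is Hammersley-Clifford and
`G`-Hammersley-Clifford. -/
theorem statement19 [Countable V]
    (G : SimpleGraph V) (hlf : ∀ v : V, (G.neighborSet v).Finite) (hbip : Bipartite G)
    (S : Subgroup (Equiv.Perm V)) (hS : PreservesAdj G S) :
    IsHammersleyClifford G (homSpace G C4) ∧
      IsGHammersleyClifford G S (homSpace G C4) := by
  exact statement19' hlf hbip S hS
end HC
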